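/- arXiv:2411.05837 — 4 statements merged into one kernel-verified Lean document; each statement's English description precedes it below -/
import Mathlib

section
/- For a k-layer neural network f_W(x) = W_k φ(...φ(W_1 x)) with 1-Lipschitz activation φ, φ(0)=0, and weight matrices satisfying ‖W_i‖ ≤ B_i and input ‖x‖ ≤ C, the map W ↦ f_W(x) is Lipschitz in the full parameter vector W with Lipschitz constant at most Δ_{k,1}·C, where Δ_{k,1} = Σ_{i=1}^k ∏_{j≠i, j≤k} B_j. -/
open Finset

/-- The `ℓ₂` (spectral) operator norm of a matrix. -/
noncomputable def sNorm {n m : ℕ} (M : Matrix (Fin n) (Fin m) ℝ) : ℝ :=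
  ‖LinearMap.toContinuousLinearMap (Matrix.toEuclideanLin M)‖

/-- A `k`-layer neural network `f_W(x) = W_k φ(W_{k-1} φ(⋯ φ(W_1 x)))` with layer
dimensions `d 0, d 1, …, d k` and weight matrices `W i : ℝ^{d(i+1) × d(i)}`
(so `W 0, …, W (k-1)` are the weights `W_1, …, W_k` of the paper). -/
noncomputable def net (φ : ℝ → ℝ) (d : ℕ → ℕ)
    (W : (i : ℕ) → Matrix (Fin (d (i+1))) (Fin (d i)) ℝ) :
    (k : ℕ) → EuclideanSpace ℝ (Fin (d 0)) → EuclideanSpace ℝ (Fin (d k))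
  | 0 => fun x => x
  | 1 => fun x => Matrix.toEuclideanLin (W 0) x
  | (k+2) => fun x =>
      Matrix.toEuclideanLin (W (k+1)) ((WithLp.equiv 2 _).symm fun j => φ (net φ d W (k+1) x j))

/-- The concatenated parameter vector of the first `k` weight matrices, with the
Euclidean (ℓ₂) norm on the concatenation of all entries. -/
abbrev Params (d : ℕ → ℕ) (k : ℕ) : Type :=
  PiLp 2 (fun i : Fin k => EuclideanSpace ℝ (Fin (d (i.1 + 1)) × Fin (d i.1)))

/-- The weight matrices encoded by a parameter vector (`0` beyond layer `k`). -/
noncomputable def pW (d : ℕ → ℕ) (k : ℕ) (p : Params d k) :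
    (i : ℕ) → Matrix (Fin (d (i+1))) (Fin (d i)) ℝ :=
  fun i => if h : i < k then Matrix.of (fun a b => p ⟨i, h⟩ (a, b)) else 0

/-- The `k`-layer network as a function of its concatenated parameter vector. -/
noncomputable def netP (φ : ℝ → ℝ) (d : ℕ → ℕ) (k : ℕ) (p : Params d k) :
    EuclideanSpace ℝ (Fin (d 0)) → EuclideanSpace ℝ (Fin (d k)) :=
  net φ d (pW d k p) k

/- ### Auxiliary lemmas -/

lemma sNorm_nonneg' {n m : ℕ} (M : Matrix (Fin n) (Fin m) ℝ) : 0 ≤ sNorm M :=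
  norm_nonneg _

lemma sNorm_apply_le {n m : ℕ} (M : Matrix (Fin n) (Fin m) ℝ) (v : EuclideanSpace ℝ (Fin m)) :
    ‖Matrix.toEuclideanLin M v‖ ≤ sNorm M * ‖v‖ := by
  simpa [sNorm] using (LinearMap.toContinuousLinearMap (Matrix.toEuclideanLin M)).le_opNorm v

/-- Spectral norm is at most the Frobenius (entrywise ℓ₂) norm. -/
lemma sNorm_le_entrywise {n m : ℕ} (v : EuclideanSpace ℝ (Fin n × Fin m)) :
    sNorm (Matrix.of fun a b => v (a, b)) ≤ ‖v‖ := by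
  apply ContinuousLinearMap.opNorm_le_bound _ (norm_nonneg v)
  intro x
  simp only [LinearMap.coe_toContinuousLinearMap']
  have hv : ‖v‖ * ‖x‖
      = Real.sqrt ((∑ ab, ‖v ab‖ ^ 2) * (∑ b, ‖x b‖ ^ 2)) := by
    rw [EuclideanSpace.norm_eq, EuclideanSpace.norm_eq, ← Real.sqrt_mul (by positivity)]
  rw [hv, EuclideanSpace.norm_eq]
  apply Real.sqrt_le_sqrt
  rw [Fintype.sum_prod_type, Finset.sum_mul]
  apply Finset.sum_le_sum
  intro a _
  have key := Finset.sum_mul_sq_le_sq_mul_sq Finset.univ (fun b => v (a, b)) (fun b => x b)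
  simp only [Matrix.toEuclideanLin_apply, WithLp.equiv_symm_apply, PiLp.toLp_apply, Matrix.mulVec,
    dotProduct, Matrix.of_apply, Real.norm_eq_abs, sq_abs]
  convert key using 2

/-- The coordinatewise activation layer is `1`-Lipschitz. -/
lemma act_diff_le {φ : ℝ → ℝ} (hφ : LipschitzWith 1 φ) {n : ℕ}
    (y z : EuclideanSpace ℝ (Fin n)) :
    ‖((WithLp.equiv 2 (Fin n → ℝ)).symm fun j => φ (y j))
      - ((WithLp.equiv 2 (Fin n → ℝ)).symm fun j => φ (z j))‖ ≤ ‖y - z‖ := by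
  rw [EuclideanSpace.norm_eq, EuclideanSpace.norm_eq]
  apply Real.sqrt_le_sqrt
  apply Finset.sum_le_sum
  intro j _
  have h1 : dist (φ (y j)) (φ (z j)) ≤ dist (y j) (z j) := by
    simpa using hφ.dist_le_mul (y j) (z j)
  simp only [Real.dist_eq] at h1
  simp only [PiLp.sub_apply, WithLp.equiv_symm_apply, PiLp.toLp_apply, Real.norm_eq_abs, sq_abs]
  calc (φ (y j) - φ (z j)) ^ 2 = |φ (y j) - φ (z j)| ^ 2 := (sq_abs _).symm
    _ ≤ |y j - z j| ^ 2 := by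
        apply pow_le_pow_left₀ (abs_nonneg _) h1
    _ = (y j - z j) ^ 2 := sq_abs _

lemma act_norm_le {φ : ℝ → ℝ} (hφ : LipschitzWith 1 φ) (hφ0 : φ 0 = 0) {n : ℕ}
    (y : EuclideanSpace ℝ (Fin n)) :
    ‖((WithLp.equiv 2 (Fin n → ℝ)).symm fun j => φ (y j))‖ ≤ ‖y‖ := by
  have := act_diff_le hφ y (0 : EuclideanSpace ℝ (Fin n))
  simpa [hφ0, show ((WithLp.equiv 2 (Fin n → ℝ)).symm fun _ => (0:ℝ)) = 0 from rfl] using this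

lemma net_norm_le (φ : ℝ → ℝ) (hφ : LipschitzWith 1 φ) (hφ0 : φ 0 = 0) (d : ℕ → ℕ)
    (B : ℕ → ℝ) (x : EuclideanSpace ℝ (Fin (d 0))) :
    ∀ (k : ℕ) (W : (i : ℕ) → Matrix (Fin (d (i+1))) (Fin (d i)) ℝ),
      (∀ i < k, sNorm (W i) ≤ B i) →
      ‖net φ d W k x‖ ≤ (∏ j ∈ range k, B j) * ‖x‖ := by
  intro k
  induction k with
  | zero => intro W _; simp [net]
  | succ k ih =>
    intro W hW
    have hBk : 0 ≤ B k := le_trans (sNorm_nonneg' _) (hW k (Nat.lt_succ_self k))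
    match k with
    | 0 =>
      have hnet : net φ d W 1 x = Matrix.toEuclideanLin (W 0) x := rfl
      rw [hnet]
      calc ‖Matrix.toEuclideanLin (W 0) x‖ ≤ sNorm (W 0) * ‖x‖ := sNorm_apply_le _ _
        _ ≤ B 0 * ‖x‖ := by
            apply mul_le_mul_of_nonneg_right (hW 0 (by norm_num)) (norm_nonneg _)
        _ = (∏ j ∈ range 1, B j) * ‖x‖ := by simp
    | (k+1) =>
      have hnet : net φ d W (k+2) x
          = Matrix.toEuclideanLin (W (k+1))
              ((WithLp.equiv 2 _).symm fun j => φ (net φ d W (k+1) x j)) := rfl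
      rw [hnet]
      have h1 := sNorm_apply_le (W (k+1))
        ((WithLp.equiv 2 _).symm fun j => φ (net φ d W (k+1) x j))
      have h2 := act_norm_le hφ hφ0 (net φ d W (k+1) x)
      have h3 := ih W (fun i hi => hW i (Nat.lt_succ_of_lt hi))
      calc ‖Matrix.toEuclideanLin (W (k+1)) _‖
          ≤ sNorm (W (k+1)) * ‖((WithLp.equiv 2 _).symm fun j => φ (net φ d W (k+1) x j))‖ := h1
        _ ≤ B (k+1) * ‖net φ d W (k+1) x‖ := by
            apply mul_le_mul (hW (k+1) (Nat.lt_succ_self _)) h2 (norm_nonneg _)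
              (le_trans (sNorm_nonneg' _) (hW (k+1) (Nat.lt_succ_self _)))
        _ ≤ B (k+1) * ((∏ j ∈ range (k+1), B j) * ‖x‖) := by
            apply mul_le_mul_of_nonneg_left h3 hBk
        _ = (∏ j ∈ range (k+2), B j) * ‖x‖ := by
            simp only [prod_range_succ]; ring

lemma delta_succ (B : ℕ → ℝ) (k : ℕ) :
    ∑ i ∈ range (k+1), ∏ j ∈ (range (k+1)).erase i, B j
      = B k * (∑ i ∈ range k, ∏ j ∈ (range k).erase i, B j) + ∏ j ∈ range k, B j := by
  have h1 : (range (k+1)).erase k = range k := by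
    rw [range_add_one, erase_insert notMem_range_self]
  have h2 : ∀ i ∈ range k, ∏ j ∈ (range (k+1)).erase i, B j
      = B k * ∏ j ∈ (range k).erase i, B j := by
    intro i hi
    have hik : i ≠ k := ne_of_lt (mem_range.mp hi)
    rw [range_add_one, erase_insert_of_ne hik.symm,
      prod_insert (fun h => notMem_range_self (mem_of_mem_erase h))]
  rw [sum_range_succ, h1, sum_congr rfl h2, ← mul_sum]

lemma net_diff_le (φ : ℝ → ℝ) (hφ : LipschitzWith 1 φ) (hφ0 : φ 0 = 0) (d : ℕ → ℕ)
    (B : ℕ → ℝ) (C : ℝ) (x : EuclideanSpace ℝ (Fin (d 0))) (hx : ‖x‖ ≤ C)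
    (ε : ℝ) (hε : 0 ≤ ε) :
    ∀ (k : ℕ) (W V : (i : ℕ) → Matrix (Fin (d (i+1))) (Fin (d i)) ℝ),
      (∀ i < k, sNorm (W i) ≤ B i) → (∀ i < k, sNorm (V i) ≤ B i) →
      (∀ i < k, sNorm (W i - V i) ≤ ε) →
      ‖net φ d W k x - net φ d V k x‖
        ≤ (∑ i ∈ range k, ∏ j ∈ (range k).erase i, B j) * C * ε := by
  have hC : 0 ≤ C := le_trans (norm_nonneg x) hx
  intro k
  induction k with
  | zero => intro W V _ _ _; simp [net]
  | succ k ih =>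
    intro W V hW hV hd
    have hBk : 0 ≤ B k := le_trans (sNorm_nonneg' _) (hW k (Nat.lt_succ_self k))
    match k with
    | 0 =>
      have hnet : net φ d W 1 x - net φ d V 1 x
          = Matrix.toEuclideanLin (W 0 - V 0) x := by
        show Matrix.toEuclideanLin (W 0) x - Matrix.toEuclideanLin (V 0) x = _
        rw [map_sub, LinearMap.sub_apply]
      rw [hnet]
      calc ‖Matrix.toEuclideanLin (W 0 - V 0) x‖ ≤ sNorm (W 0 - V 0) * ‖x‖ :=
            sNorm_apply_le _ _
        _ ≤ ε * C := mul_le_mul (hd 0 (by norm_num)) hx (norm_nonneg _) hε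
        _ = (∑ i ∈ range 1, ∏ j ∈ (range 1).erase i, B j) * C * ε := by
            simp; ring
    | (k+1) =>
      set u := net φ d W (k+1) x with hu
      set v := net φ d V (k+1) x with hv
      set au : EuclideanSpace ℝ (Fin (d (k+1))) := (WithLp.equiv 2 _).symm fun j => φ (u j)
      set av : EuclideanSpace ℝ (Fin (d (k+1))) := (WithLp.equiv 2 _).symm fun j => φ (v j)
      have hnet : net φ d W (k+2) x - net φ d V (k+2) x
          = Matrix.toEuclideanLin (W (k+1)) (au - av)
            + Matrix.toEuclideanLin (W (k+1) - V (k+1)) av := by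
        show Matrix.toEuclideanLin (W (k+1)) au - Matrix.toEuclideanLin (V (k+1)) av = _
        rw [map_sub (Matrix.toEuclideanLin (W (k+1))), map_sub, LinearMap.sub_apply]
        abel
      have hWk : sNorm (W (k+1)) ≤ B (k+1) := hW (k+1) (Nat.lt_succ_self _)
      have hprod : 0 ≤ ∏ j ∈ range (k+1), B j := by
        apply prod_nonneg
        intro j hj
        exact le_trans (sNorm_nonneg' _) (hV j (Nat.lt_succ_of_lt (mem_range.mp hj)))
      have hΔ : 0 ≤ ∑ i ∈ range (k+1), ∏ j ∈ (range (k+1)).erase i, B j := by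
        apply sum_nonneg
        intro i hi
        apply prod_nonneg
        intro j hj
        exact le_trans (sNorm_nonneg' _)
          (hV j (Nat.lt_succ_of_lt (mem_range.mp (mem_of_mem_erase hj))))
      have hih := ih W V (fun i hi => hW i (Nat.lt_succ_of_lt hi))
        (fun i hi => hV i (Nat.lt_succ_of_lt hi)) (fun i hi => hd i (Nat.lt_succ_of_lt hi))
      have hvn : ‖v‖ ≤ (∏ j ∈ range (k+1), B j) * C := by
        calc ‖v‖ ≤ (∏ j ∈ range (k+1), B j) * ‖x‖ :=
              net_norm_le φ hφ hφ0 d B x (k+1) V (fun i hi => hV i (Nat.lt_succ_of_lt hi))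
          _ ≤ (∏ j ∈ range (k+1), B j) * C := mul_le_mul_of_nonneg_left hx hprod
      rw [hnet]
      calc ‖Matrix.toEuclideanLin (W (k+1)) (au - av)
              + Matrix.toEuclideanLin (W (k+1) - V (k+1)) av‖
          ≤ ‖Matrix.toEuclideanLin (W (k+1)) (au - av)‖
              + ‖Matrix.toEuclideanLin (W (k+1) - V (k+1)) av‖ := norm_add_le _ _
        _ ≤ sNorm (W (k+1)) * ‖au - av‖ + sNorm (W (k+1) - V (k+1)) * ‖av‖ :=
            add_le_add (sNorm_apply_le _ _) (sNorm_apply_le _ _)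
        _ ≤ B (k+1) * ‖u - v‖ + ε * ‖v‖ := by
            apply add_le_add
            · exact mul_le_mul hWk (act_diff_le hφ u v) (norm_nonneg _)
                (le_trans (sNorm_nonneg' _) hWk)
            · exact mul_le_mul (hd (k+1) (Nat.lt_succ_self _)) (act_norm_le hφ hφ0 v)
                (norm_nonneg _) hε
        _ ≤ B (k+1) * ((∑ i ∈ range (k+1), ∏ j ∈ (range (k+1)).erase i, B j) * C * ε)
              + ε * ((∏ j ∈ range (k+1), B j) * C) := by
            apply add_le_add
            · exact mul_le_mul_of_nonneg_left hih
                (le_trans (sNorm_nonneg' _) hWk)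
            · exact mul_le_mul_of_nonneg_left hvn hε
        _ = (∑ i ∈ range (k+2), ∏ j ∈ (range (k+2)).erase i, B j) * C * ε := by
            rw [delta_succ B (k+1)]; ring

/-- For a `k`-layer network with `1`-Lipschitz activation `φ`, `φ 0 = 0`,
all weight matrices of spectral norm at most `B i`, and `‖x‖ ≤ C`, the map
`W ↦ f_W(x)` is Lipschitz in the concatenated parameter vector with constant
`Δ_{k,1} C`, where `Δ_{k,1} = ∑_{i=1}^k ∏_{j ≠ i} B_j`. -/
theorem net_param_lipschitz (φ : ℝ → ℝ) (hφ : LipschitzWith 1 φ) (hφ0 : φ 0 = 0)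
    (d : ℕ → ℕ) (k : ℕ) (B : ℕ → ℝ) (C : ℝ)
    (x : EuclideanSpace ℝ (Fin (d 0))) (hx : ‖x‖ ≤ C)
    (p q : Params d k)
    (hp : ∀ i : Fin k, sNorm (pW d k p i.1) ≤ B i.1)
    (hq : ∀ i : Fin k, sNorm (pW d k q i.1) ≤ B i.1) :
    ‖netP φ d k p x - netP φ d k q x‖
      ≤ ((∑ i ∈ range k, ∏ j ∈ (range k).erase i, B j) * C) * ‖p - q‖ := by
  have hd : ∀ i < k, sNorm (pW d k p i - pW d k q i) ≤ ‖p - q‖ := by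
    intro i hi
    have hsub : pW d k p i - pW d k q i
        = Matrix.of (fun a b => (p - q) ⟨i, hi⟩ (a, b)) := by
      ext a b
      simp [pW, hi]
    rw [hsub]
    refine le_trans (sNorm_le_entrywise ((p - q) ⟨i, hi⟩)) ?_
    -- component norm ≤ total PiLp 2 norm
    rw [PiLp.norm_eq_of_L2 (p - q)]
    calc ‖(p - q) ⟨i, hi⟩‖ = Real.sqrt (‖(p - q) ⟨i, hi⟩‖ ^ 2) :=
          (Real.sqrt_sq (norm_nonneg _)).symm
      _ ≤ _ := by
        apply Real.sqrt_le_sqrt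
        exact Finset.single_le_sum (f := fun j : Fin k => ‖(p - q) j‖ ^ 2)
          (fun j _ => sq_nonneg _) (mem_univ (⟨i, hi⟩ : Fin k))
  have := net_diff_le φ hφ hφ0 d B C x hx (‖p - q‖) (norm_nonneg _) k
    (pW d k p) (pW d k q) (fun i hi => hp ⟨i, hi⟩) (fun i hi => hq ⟨i, hi⟩) hd
  calc ‖netP φ d k p x - netP φ d k q x‖
      ≤ (∑ i ∈ range k, ∏ j ∈ (range k).erase i, B j) * C * ‖p - q‖ := this
    _ = ((∑ i ∈ range k, ∏ j ∈ (range k).erase i, B j) * C) * ‖p - q‖ := rfl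
end

section
/- For a k-layer neural network with 1-Lipschitz, 1-smooth activation φ satisfying φ(0)=0, weight bounds ‖W_i‖ ≤ B_i with B_i ≥ 1, and input bound ‖x‖ ≤ C with C ≥ 1, the parameter gradient map W ↦ ∇_W f_W(x) is Lipschitz with constant at most 3k·Δ_{k,1}²·C², where Δ_{k,1} = Σ_{i=1}^k ∏_{j≠i, j≤k} B_j. -/
open Finset

/-! ### Auxiliary material -/

noncomputable abbrev En (n : ℕ) : Type := EuclideanSpace ℝ (Fin n)

lemma esq' {ι : Type*} [Fintype ι] (v : EuclideanSpace ℝ ι) :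
    ‖v‖ = Real.sqrt (∑ j, (v j) ^ 2) := by
  rw [EuclideanSpace.norm_eq]
  congr 1; apply Finset.sum_congr rfl; intro j _
  rw [Real.norm_eq_abs, sq_abs]

lemma enorm_le_enorm {n : ℕ} {v w : En n} (h : ∀ j, |v j| ≤ |w j|) : ‖v‖ ≤ ‖w‖ := by
  rw [esq', esq']
  apply Real.sqrt_le_sqrt
  apply Finset.sum_le_sum
  intro j _
  rw [← sq_abs (v j), ← sq_abs (w j)]
  exact pow_le_pow_left₀ (abs_nonneg _) (h j) 2

lemma enorm_le_mul {n : ℕ} {u c w : En n} (h : ∀ j, |u j| ≤ |c j| * |w j|) :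
    ‖u‖ ≤ ‖c‖ * ‖w‖ := by
  rw [esq', esq', esq', ← Real.sqrt_mul (by positivity)]
  apply Real.sqrt_le_sqrt
  calc ∑ j, (u j) ^ 2 ≤ ∑ j, (c j) ^ 2 * (w j) ^ 2 := by
        apply Finset.sum_le_sum; intro j _
        rw [← sq_abs (u j), ← sq_abs (c j), ← sq_abs (w j), ← mul_pow]
        exact pow_le_pow_left₀ (abs_nonneg _) (h j) 2
    _ ≤ ∑ j, (c j) ^ 2 * ∑ i, (w i) ^ 2 := by
        apply Finset.sum_le_sum; intro j _
        exact mul_le_mul_of_nonneg_left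
          (Finset.single_le_sum (f := fun i => (w i) ^ 2) (fun i _ => sq_nonneg _)
            (Finset.mem_univ j)) (sq_nonneg _)
    _ = (∑ j, (c j) ^ 2) * ∑ i, (w i) ^ 2 := by rw [← Finset.sum_mul]

/-! ### Matrices as continuous linear maps -/

noncomputable def mCLM {n m : ℕ} (M : Matrix (Fin n) (Fin m) ℝ) : En m →L[ℝ] En n :=
  LinearMap.toContinuousLinearMap (Matrix.toEuclideanLin M)

lemma mCLM_apply {n m : ℕ} (M : Matrix (Fin n) (Fin m) ℝ) (v : En m) (a : Fin n) :
    mCLM M v a = ∑ b, M a b * v b := by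
  simp [mCLM, Matrix.toEuclideanLin_apply, Matrix.mulVec, dotProduct]

lemma mCLM_add {n m : ℕ} (M N : Matrix (Fin n) (Fin m) ℝ) : mCLM (M + N) = mCLM M + mCLM N := by
  unfold mCLM; ext v j; simp [map_add]

lemma mCLM_smul {n m : ℕ} (c : ℝ) (M : Matrix (Fin n) (Fin m) ℝ) : mCLM (c • M) = c • mCLM M := by
  unfold mCLM; ext v j; simp [map_smul]

lemma mCLM_le_frob {n m : ℕ} (M : Matrix (Fin n) (Fin m) ℝ) (v : En m) :
    ‖mCLM M v‖ ≤ Real.sqrt (∑ a, ∑ b, (M a b) ^ 2) * ‖v‖ := by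
  rw [esq', esq', ← Real.sqrt_mul (by positivity)]
  apply Real.sqrt_le_sqrt
  calc ∑ a, (mCLM M v a) ^ 2
      ≤ ∑ a, (∑ b, (M a b) ^ 2) * (∑ b, (v b) ^ 2) := by
        apply Finset.sum_le_sum; intro a _
        rw [mCLM_apply]
        exact Finset.sum_mul_sq_le_sq_mul_sq _ _ _
    _ = (∑ a, ∑ b, (M a b) ^ 2) * ∑ b, (v b) ^ 2 := by rw [← Finset.sum_mul]

lemma pW_add (d : ℕ → ℕ) (k : ℕ) (p q : Params d k) (m : ℕ) :
    pW d k (p + q) m = pW d k p m + pW d k q m := by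
  unfold pW
  split
  · ext a b; simp [Matrix.add_apply]
  · simp

lemma pW_smul (d : ℕ → ℕ) (k : ℕ) (c : ℝ) (p : Params d k) (m : ℕ) :
    pW d k (c • p) m = c • pW d k p m := by
  unfold pW
  split
  · ext a b; simp [Matrix.smul_apply]
  · simp

lemma piLp_apply_norm_le {ι : Type*} [Fintype ι] {β : ι → Type*}
    [∀ i, SeminormedAddCommGroup (β i)] (p : PiLp 2 β) (i : ι) : ‖p i‖ ≤ ‖p‖ := by
  rw [PiLp.norm_eq_of_L2]
  rw [show ‖p i‖ = Real.sqrt (‖p i‖ ^ 2) by rw [Real.sqrt_sq (norm_nonneg _)]]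
  apply Real.sqrt_le_sqrt
  exact Finset.single_le_sum (f := fun j => ‖p j‖ ^ 2) (fun j _ => sq_nonneg _) (Finset.mem_univ i)

lemma frob_pW_le (d : ℕ → ℕ) (k : ℕ) (p : Params d k) (m : ℕ) :
    Real.sqrt (∑ a, ∑ b, (pW d k p m a b) ^ 2) ≤ ‖p‖ := by
  unfold pW
  split
  · next h =>
    have he : ∑ a, ∑ b, (Matrix.of (fun a b => p ⟨m, h⟩ (a, b)) a b) ^ 2 = ‖p ⟨m, h⟩‖ ^ 2 := by
      rw [esq' (p ⟨m, h⟩), Real.sq_sqrt (by positivity), Fintype.sum_prod_type]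
      rfl
    rw [he, Real.sqrt_sq (norm_nonneg _)]
    exact piLp_apply_norm_le p _
  · simp

/-! ### The layer bilinear maps -/

noncomputable def bilL (d : ℕ → ℕ) (k m : ℕ) :
    Params d k →L[ℝ] (En (d m) →L[ℝ] En (d (m+1))) :=
  LinearMap.mkContinuous₂
    (LinearMap.mk₂ ℝ (fun p v => mCLM (pW d k p m) v)
      (fun p p' v => by rw [pW_add, mCLM_add]; rfl)
      (fun c p v => by rw [pW_smul, mCLM_smul]; rfl)
      (fun p v v' => map_add _ _ _)
      (fun c p v => map_smul _ _ _))
    1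
    (fun p v => by
      simpa using (mCLM_le_frob (pW d k p m) v).trans
        (mul_le_mul_of_nonneg_right (frob_pW_le d k p m) (norm_nonneg v)))

lemma bilL_apply (d : ℕ → ℕ) (k m : ℕ) (p : Params d k) (v : En (d m)) :
    bilL d k m p v = mCLM (pW d k p m) v := rfl

lemma norm_bilL_apply_le (d : ℕ → ℕ) (k m : ℕ) (p : Params d k) (v : En (d m)) :
    ‖bilL d k m p v‖ ≤ ‖p‖ * ‖v‖ := by
  exact (mCLM_le_frob (pW d k p m) v).trans
    (mul_le_mul_of_nonneg_right (frob_pW_le d k p m) (norm_nonneg v))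

lemma norm_bilL_fst (d : ℕ → ℕ) (k m : ℕ) (p : Params d k) :
    ‖bilL d k m p‖ ≤ ‖p‖ :=
  ContinuousLinearMap.opNorm_le_bound _ (norm_nonneg p) (norm_bilL_apply_le d k m p)

lemma norm_bilL_eq_sNorm (d : ℕ → ℕ) (k m : ℕ) (p : Params d k) :
    ‖bilL d k m p‖ = sNorm (pW d k p m) := by
  have h : bilL d k m p = LinearMap.toContinuousLinearMap (Matrix.toEuclideanLin (pW d k p m)) :=
    ContinuousLinearMap.ext fun v => rfl
  rw [h]; rfl

/-! ### The activation map -/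

noncomputable def Phi (φ : ℝ → ℝ) {n : ℕ} (v : En n) : En n :=
  (WithLp.equiv 2 _).symm fun j => φ (v j)

lemma Phi_apply (φ : ℝ → ℝ) {n : ℕ} (v : En n) (j : Fin n) : Phi φ v j = φ (v j) := rfl

noncomputable def DPhi (φ : ℝ → ℝ) {n : ℕ} (v : En n) : En n →L[ℝ] En n :=
  ((PiLp.continuousLinearEquiv 2 ℝ (fun _ : Fin n => ℝ)).symm.toContinuousLinearMap.comp
    ((ContinuousLinearMap.pi fun j => deriv φ (v j) • ContinuousLinearMap.proj j).comp
      (PiLp.continuousLinearEquiv 2 ℝ (fun _ : Fin n => ℝ)).toContinuousLinearMap))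

lemma DPhi_apply (φ : ℝ → ℝ) {n : ℕ} (v w : En n) (j : Fin n) :
    DPhi φ v w j = deriv φ (v j) * w j := rfl

lemma hasFDerivAt_Phi (φ : ℝ → ℝ) (hφdiff : Differentiable ℝ φ) {n : ℕ} (v : En n) :
    HasFDerivAt (Phi φ (n := n)) (DPhi φ v) v := by
  have h1 : ∀ j : Fin n, HasFDerivAt (fun u : En n => φ (u j))
      ((deriv φ (v j) • ContinuousLinearMap.proj j).comp
        (PiLp.continuousLinearEquiv 2 ℝ (fun _ : Fin n => ℝ)).toContinuousLinearMap) v := by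
    intro j
    have hd : HasDerivAt φ (deriv φ (v j)) (v j) := (hφdiff (v j)).hasDerivAt
    have hproj : HasFDerivAt (fun u : En n => u j)
        ((ContinuousLinearMap.proj j).comp
          (PiLp.continuousLinearEquiv 2 ℝ (fun _ : Fin n => ℝ)).toContinuousLinearMap) v :=
      ((ContinuousLinearMap.proj j).comp
        (PiLp.continuousLinearEquiv 2 ℝ (fun _ : Fin n => ℝ)).toContinuousLinearMap).hasFDerivAt
    have h := hd.comp_hasFDerivAt v hproj
    rw [ContinuousLinearMap.smul_comp]; exact h
  have h2 : HasFDerivAt (fun u : En n => (fun j => φ (u j) : Fin n → ℝ))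
      ((ContinuousLinearMap.pi fun j => (deriv φ (v j) • ContinuousLinearMap.proj j).comp
        (PiLp.continuousLinearEquiv 2 ℝ (fun _ : Fin n => ℝ)).toContinuousLinearMap)) v :=
    hasFDerivAt_pi.2 h1
  have h3 := ((PiLp.continuousLinearEquiv 2 ℝ
    (fun _ : Fin n => ℝ)).symm.toContinuousLinearMap.hasFDerivAt).comp v h2
  exact h3

lemma abs_deriv_le {φ : ℝ → ℝ} (hφdiff : Differentiable ℝ φ) (hφ : LipschitzWith 1 φ) (t : ℝ) :
    |deriv φ t| ≤ 1 := by
  have h := (hφdiff t).hasDerivAt.hasFDerivAt.le_of_lipschitz hφ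
  calc |deriv φ t| = ‖(ContinuousLinearMap.smulRight (1 : ℝ →L[ℝ] ℝ) (deriv φ t)) 1‖ := by
        simp [Real.norm_eq_abs]
    _ ≤ ‖ContinuousLinearMap.smulRight (1 : ℝ →L[ℝ] ℝ) (deriv φ t)‖ * ‖(1 : ℝ)‖ :=
        ContinuousLinearMap.le_opNorm _ _
    _ ≤ 1 := by simpa using h

lemma lip_abs {φ : ℝ → ℝ} (hφ : LipschitzWith 1 φ) (a b : ℝ) : |φ a - φ b| ≤ |a - b| := by
  have := hφ.dist_le_mul a b
  simpa [Real.dist_eq] using this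

lemma norm_Phi_sub {φ : ℝ → ℝ} (hφ : LipschitzWith 1 φ) {n : ℕ} (v w : En n) :
    ‖Phi φ v - Phi φ w‖ ≤ ‖v - w‖ := by
  apply enorm_le_enorm
  intro j
  have h1 : (Phi φ v - Phi φ w) j = φ (v j) - φ (w j) := rfl
  have h2 : (v - w) j = v j - w j := rfl
  rw [h1, h2]
  exact lip_abs hφ _ _

lemma norm_Phi_le {φ : ℝ → ℝ} (hφ : LipschitzWith 1 φ) (hφ0 : φ 0 = 0) {n : ℕ} (v : En n) :
    ‖Phi φ v‖ ≤ ‖v‖ := by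
  have h0 : Phi φ (0 : En n) = 0 := by
    ext j
    show φ ((0 : En n) j) = 0
    simpa using hφ0
  simpa [h0] using norm_Phi_sub hφ v (0 : En n)

lemma norm_DPhi_apply {φ : ℝ → ℝ} (hφdiff : Differentiable ℝ φ) (hφ : LipschitzWith 1 φ)
    {n : ℕ} (v w : En n) : ‖DPhi φ v w‖ ≤ ‖w‖ := by
  apply enorm_le_enorm
  intro j
  rw [DPhi_apply, abs_mul]
  exact mul_le_of_le_one_left (abs_nonneg _) (abs_deriv_le hφdiff hφ _)

lemma norm_DPhi_sub_apply {φ : ℝ → ℝ} (hφsmooth : LipschitzWith 1 (deriv φ)) {n : ℕ}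
    (v v' w : En n) : ‖(DPhi φ v - DPhi φ v') w‖ ≤ ‖v - v'‖ * ‖w‖ := by
  apply enorm_le_mul
  intro j
  have h1 : ((DPhi φ v - DPhi φ v') w) j = deriv φ (v j) * w j - deriv φ (v' j) * w j := rfl
  have h2 : (v - v') j = v j - v' j := rfl
  rw [h1, h2, ← sub_mul, abs_mul]
  exact mul_le_mul_of_nonneg_right (lip_abs hφsmooth _ _) (abs_nonneg _)

/-! ### Arithmetic about the constants -/

noncomputable def Del (B : ℕ → ℝ) (m : ℕ) : ℝ :=
  ∑ i ∈ range m, ∏ j ∈ (range m).erase i, B j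

lemma Del_nonneg {B : ℕ → ℝ} (hB : ∀ i, 1 ≤ B i) (m : ℕ) : 0 ≤ Del B m :=
  Finset.sum_nonneg fun i _ => Finset.prod_nonneg fun j _ => le_trans zero_le_one (hB j)

lemma one_le_prodB {B : ℕ → ℝ} (hB : ∀ i, 1 ≤ B i) (m : ℕ) : 1 ≤ ∏ j ∈ range m, B j := by
  induction m with
  | zero => simp
  | succ n ih =>
    rw [Finset.prod_range_succ]
    nlinarith [hB n]

lemma Del_succ (B : ℕ → ℝ) (m : ℕ) :
    Del B (m+1) = (∏ j ∈ range m, B j) + B m * Del B m := by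
  unfold Del
  rw [Finset.sum_range_succ]
  have hm : m ∉ range m := by simp
  have h1 : ∀ i ∈ range m, ∏ j ∈ (range (m+1)).erase i, B j
      = B m * ∏ j ∈ (range m).erase i, B j := by
    intro i hi
    have hne : m ≠ i := by
      have := Finset.mem_range.1 hi; omega
    rw [Finset.range_add_one, Finset.erase_insert_of_ne hne]
    exact Finset.prod_insert (fun hc => hm (Finset.mem_of_mem_erase hc))
  rw [Finset.sum_congr rfl h1, ← Finset.mul_sum, Finset.range_add_one, Finset.erase_insert hm]
  ring

lemma Del_le_succ {B : ℕ → ℝ} (hB : ∀ i, 1 ≤ B i) (m : ℕ) : Del B m ≤ Del B (m+1) := by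
  rw [Del_succ]
  nlinarith [Del_nonneg hB m, hB m, one_le_prodB hB m]

lemma one_le_Del_succ {B : ℕ → ℝ} (hB : ∀ i, 1 ≤ B i) (m : ℕ) : 1 ≤ Del B (m+1) := by
  rw [Del_succ]
  nlinarith [Del_nonneg hB m, hB m, one_le_prodB hB m]

/-! ### The forward maps and their derivatives -/

noncomputable def nv (φ : ℝ → ℝ) (d : ℕ → ℕ) (k : ℕ) (x : En (d 0)) :
    (m : ℕ) → Params d k → En (d m)
  | 0 => fun _ => x
  | (m+1) => fun p => Phi φ (bilL d k m p (nv φ d k x m p))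

noncomputable def nDv (φ : ℝ → ℝ) (d : ℕ → ℕ) (k : ℕ) (x : En (d 0)) :
    (m : ℕ) → Params d k → (Params d k →L[ℝ] En (d m))
  | 0 => fun _ => 0
  | (m+1) => fun p =>
      (DPhi φ (bilL d k m p (nv φ d k x m p))).comp
        ((bilL d k m).precompR (Params d k) p (nDv φ d k x m p)
          + (bilL d k m).precompL (Params d k) (ContinuousLinearMap.id ℝ (Params d k))
              (nv φ d k x m p))

lemma nDv_succ_apply (φ : ℝ → ℝ) (d : ℕ → ℕ) (k : ℕ) (x : En (d 0)) (m : ℕ)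
    (p h : Params d k) :
    nDv φ d k x (m+1) p h
      = DPhi φ (bilL d k m p (nv φ d k x m p))
          (bilL d k m p (nDv φ d k x m p h) + bilL d k m h (nv φ d k x m p)) := rfl

set_option maxHeartbeats 2000000 in
lemma master (φ : ℝ → ℝ) (hφdiff : Differentiable ℝ φ) (hφ : LipschitzWith 1 φ)
    (hφsmooth : LipschitzWith 1 (deriv φ)) (hφ0 : φ 0 = 0)
    (d : ℕ → ℕ) (k : ℕ) (B : ℕ → ℝ) (hB : ∀ i, 1 ≤ B i) (C : ℝ) (hC : 1 ≤ C)
    (x : En (d 0)) (hx : ‖x‖ ≤ C) : ∀ m : ℕ,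
    (∀ p, HasFDerivAt (nv φ d k x m) (nDv φ d k x m p) p) ∧
    (∀ p : Params d k, (∀ i, ‖bilL d k i p‖ ≤ B i) →
      ‖nv φ d k x m p‖ ≤ (∏ j ∈ range m, B j) * C) ∧
    (∀ p q : Params d k, (∀ i, ‖bilL d k i p‖ ≤ B i) → (∀ i, ‖bilL d k i q‖ ≤ B i) →
      ‖nv φ d k x m p - nv φ d k x m q‖ ≤ Del B m * C * ‖p - q‖) ∧
    (∀ p : Params d k, (∀ i, ‖bilL d k i p‖ ≤ B i) → ‖nDv φ d k x m p‖ ≤ Del B m * C) ∧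
    (∀ p q : Params d k, (∀ i, ‖bilL d k i p‖ ≤ B i) → (∀ i, ‖bilL d k i q‖ ≤ B i) →
      ‖nDv φ d k x m p - nDv φ d k x m q‖ ≤ 3 * m * (Del B m)^2 * C^2 * ‖p - q‖) := by
  intro m
  induction m with
  | zero =>
    refine ⟨fun p => hasFDerivAt_const x p, fun p _ => by simpa [nv] using hx,
      fun p q _ _ => ?_, fun p _ => by simp [nDv, Del], fun p q _ _ => by simp [nDv, Del]⟩
    simp [nv, Del]
  | succ m IH =>
    obtain ⟨IH1, IH2, IH3, IH4, IH5⟩ := IH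
    have hC0 : (0:ℝ) ≤ C := le_trans zero_le_one hC
    have hD0 : 0 ≤ Del B m := Del_nonneg hB m
    have hD'1 : 1 ≤ Del B (m+1) := one_le_Del_succ hB m
    have hD' : Del B (m+1) = (∏ j ∈ range m, B j) + B m * Del B m := Del_succ B m
    have hP1 : 1 ≤ ∏ j ∈ range m, B j := one_le_prodB hB m
    have hBm : 1 ≤ B m := hB m
    -- derivative
    have H1 : ∀ p, HasFDerivAt (nv φ d k x (m+1)) (nDv φ d k x (m+1) p) p := by
      intro p
      exact (hasFDerivAt_Phi φ hφdiff _).comp p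
        ((bilL d k m).hasFDerivAt_of_bilinear (hasFDerivAt_id p) (IH1 p))
    -- forward bound
    have H2 : ∀ p : Params d k, (∀ i, ‖bilL d k i p‖ ≤ B i) →
        ‖nv φ d k x (m+1) p‖ ≤ (∏ j ∈ range (m+1), B j) * C := by
      intro p hp
      have h1 : ‖nv φ d k x (m+1) p‖ ≤ ‖bilL d k m p (nv φ d k x m p)‖ :=
        norm_Phi_le hφ hφ0 _
      have h2 : ‖bilL d k m p (nv φ d k x m p)‖ ≤ B m * ((∏ j ∈ range m, B j) * C) := by
        calc ‖bilL d k m p (nv φ d k x m p)‖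
            ≤ ‖bilL d k m p‖ * ‖nv φ d k x m p‖ := ContinuousLinearMap.le_opNorm _ _
          _ ≤ B m * ((∏ j ∈ range m, B j) * C) := by
              apply mul_le_mul (hp m) (IH2 p hp) (norm_nonneg _)
              linarith
      rw [Finset.prod_range_succ]
      calc ‖nv φ d k x (m+1) p‖ ≤ B m * ((∏ j ∈ range m, B j) * C) := le_trans h1 h2
        _ = (∏ j ∈ range m, B j) * B m * C := by ring
    -- Lipschitz bound for the pre-activation z
    have Hz : ∀ p q : Params d k, (∀ i, ‖bilL d k i p‖ ≤ B i) → (∀ i, ‖bilL d k i q‖ ≤ B i) →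
        ‖bilL d k m p (nv φ d k x m p) - bilL d k m q (nv φ d k x m q)‖
          ≤ Del B (m+1) * C * ‖p - q‖ := by
      intro p q hp hq
      have key : bilL d k m p (nv φ d k x m p) - bilL d k m q (nv φ d k x m q)
          = bilL d k m p (nv φ d k x m p - nv φ d k x m q)
            + bilL d k m (p - q) (nv φ d k x m q) := by
        rw [map_sub (bilL d k m p), map_sub (bilL d k m)]
        simp only [ContinuousLinearMap.sub_apply]
        abel
      rw [key]
      have h1 : ‖bilL d k m p (nv φ d k x m p - nv φ d k x m q)‖
          ≤ B m * (Del B m * C * ‖p - q‖) := by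
        calc ‖bilL d k m p (nv φ d k x m p - nv φ d k x m q)‖
            ≤ ‖bilL d k m p‖ * ‖nv φ d k x m p - nv φ d k x m q‖ :=
              ContinuousLinearMap.le_opNorm _ _
          _ ≤ B m * (Del B m * C * ‖p - q‖) := by
              apply mul_le_mul (hp m) (IH3 p q hp hq) (norm_nonneg _)
              linarith
      have h2 : ‖bilL d k m (p - q) (nv φ d k x m q)‖
          ≤ ‖p - q‖ * ((∏ j ∈ range m, B j) * C) := by
        calc ‖bilL d k m (p - q) (nv φ d k x m q)‖
            ≤ ‖p - q‖ * ‖nv φ d k x m q‖ := norm_bilL_apply_le d k m _ _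
          _ ≤ ‖p - q‖ * ((∏ j ∈ range m, B j) * C) :=
              mul_le_mul_of_nonneg_left (IH2 q hq) (norm_nonneg _)
      calc ‖bilL d k m p (nv φ d k x m p - nv φ d k x m q)
            + bilL d k m (p - q) (nv φ d k x m q)‖
          ≤ B m * (Del B m * C * ‖p - q‖) + ‖p - q‖ * ((∏ j ∈ range m, B j) * C) :=
            le_trans (norm_add_le _ _) (add_le_add h1 h2)
        _ = Del B (m+1) * C * ‖p - q‖ := by rw [hD']; ring
    have H3 : ∀ p q : Params d k, (∀ i, ‖bilL d k i p‖ ≤ B i) → (∀ i, ‖bilL d k i q‖ ≤ B i) →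
        ‖nv φ d k x (m+1) p - nv φ d k x (m+1) q‖ ≤ Del B (m+1) * C * ‖p - q‖ := by
      intro p q hp hq
      exact le_trans (norm_Phi_sub hφ _ _) (Hz p q hp hq)
    -- derivative bound
    have H4 : ∀ p : Params d k, (∀ i, ‖bilL d k i p‖ ≤ B i) →
        ‖nDv φ d k x (m+1) p‖ ≤ Del B (m+1) * C := by
      intro p hp
      apply ContinuousLinearMap.opNorm_le_bound _ (by positivity)
      intro h
      rw [nDv_succ_apply]
      have h1 : ‖bilL d k m p (nDv φ d k x m p h)‖ ≤ B m * (Del B m * C) * ‖h‖ := by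
        calc ‖bilL d k m p (nDv φ d k x m p h)‖
            ≤ ‖bilL d k m p‖ * ‖nDv φ d k x m p h‖ := ContinuousLinearMap.le_opNorm _ _
          _ ≤ B m * (Del B m * C * ‖h‖) := by
              apply mul_le_mul (hp m) ?_ (norm_nonneg _) (by linarith)
              calc ‖nDv φ d k x m p h‖ ≤ ‖nDv φ d k x m p‖ * ‖h‖ :=
                    ContinuousLinearMap.le_opNorm _ _
                _ ≤ Del B m * C * ‖h‖ :=
                    mul_le_mul_of_nonneg_right (IH4 p hp) (norm_nonneg _)
          _ = B m * (Del B m * C) * ‖h‖ := by ring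
      have h2 : ‖bilL d k m h (nv φ d k x m p)‖ ≤ (∏ j ∈ range m, B j) * C * ‖h‖ := by
        calc ‖bilL d k m h (nv φ d k x m p)‖
            ≤ ‖h‖ * ‖nv φ d k x m p‖ := norm_bilL_apply_le d k m _ _
          _ ≤ ‖h‖ * ((∏ j ∈ range m, B j) * C) :=
              mul_le_mul_of_nonneg_left (IH2 p hp) (norm_nonneg _)
          _ = (∏ j ∈ range m, B j) * C * ‖h‖ := by ring
      calc ‖DPhi φ (bilL d k m p (nv φ d k x m p))
            (bilL d k m p (nDv φ d k x m p h) + bilL d k m h (nv φ d k x m p))‖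
          ≤ ‖bilL d k m p (nDv φ d k x m p h) + bilL d k m h (nv φ d k x m p)‖ :=
            norm_DPhi_apply hφdiff hφ _ _
        _ ≤ B m * (Del B m * C) * ‖h‖ + (∏ j ∈ range m, B j) * C * ‖h‖ :=
            le_trans (norm_add_le _ _) (add_le_add h1 h2)
        _ = Del B (m+1) * C * ‖h‖ := by rw [hD']; ring
    -- Lipschitz bound for the derivative
    have H5 : ∀ p q : Params d k, (∀ i, ‖bilL d k i p‖ ≤ B i) → (∀ i, ‖bilL d k i q‖ ≤ B i) →
        ‖nDv φ d k x (m+1) p - nDv φ d k x (m+1) q‖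
          ≤ 3 * (m+1:ℕ) * (Del B (m+1))^2 * C^2 * ‖p - q‖ := by
      intro p q hp hq
      apply ContinuousLinearMap.opNorm_le_bound _ (by positivity)
      intro h
      rw [ContinuousLinearMap.sub_apply, nDv_succ_apply, nDv_succ_apply]
      set zp := bilL d k m p (nv φ d k x m p) with hzp
      set zq := bilL d k m q (nv φ d k x m q) with hzq
      set wp := bilL d k m p (nDv φ d k x m p h) + bilL d k m h (nv φ d k x m p) with hwp
      set wq := bilL d k m q (nDv φ d k x m q h) + bilL d k m h (nv φ d k x m q) with hwq
      have split : DPhi φ zp wp - DPhi φ zq wq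
          = DPhi φ zp (wp - wq) + (DPhi φ zp - DPhi φ zq) wq := by
        rw [map_sub, ContinuousLinearMap.sub_apply]
        abel
      rw [split]
      -- bound ‖wp - wq‖
      have keyw : wp - wq
          = bilL d k m p ((nDv φ d k x m p - nDv φ d k x m q) h)
            + bilL d k m (p - q) (nDv φ d k x m q h)
            + bilL d k m h (nv φ d k x m p - nv φ d k x m q) := by
        rw [hwp, hwq]
        rw [ContinuousLinearMap.sub_apply, map_sub (bilL d k m p),
          map_sub (bilL d k m), map_sub (bilL d k m h)]
        simp only [ContinuousLinearMap.sub_apply]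
        abel
      have hw1 : ‖bilL d k m p ((nDv φ d k x m p - nDv φ d k x m q) h)‖
          ≤ B m * (3 * m * (Del B m)^2 * C^2 * ‖p - q‖) * ‖h‖ := by
        calc ‖bilL d k m p ((nDv φ d k x m p - nDv φ d k x m q) h)‖
            ≤ ‖bilL d k m p‖ * ‖(nDv φ d k x m p - nDv φ d k x m q) h‖ :=
              ContinuousLinearMap.le_opNorm _ _
          _ ≤ B m * (3 * m * (Del B m)^2 * C^2 * ‖p - q‖ * ‖h‖) := by
              apply mul_le_mul (hp m) ?_ (norm_nonneg _) (by linarith)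
              calc ‖(nDv φ d k x m p - nDv φ d k x m q) h‖
                  ≤ ‖nDv φ d k x m p - nDv φ d k x m q‖ * ‖h‖ :=
                    ContinuousLinearMap.le_opNorm _ _
                _ ≤ 3 * m * (Del B m)^2 * C^2 * ‖p - q‖ * ‖h‖ :=
                    mul_le_mul_of_nonneg_right (IH5 p q hp hq) (norm_nonneg _)
          _ = B m * (3 * m * (Del B m)^2 * C^2 * ‖p - q‖) * ‖h‖ := by ring
      have hw2 : ‖bilL d k m (p - q) (nDv φ d k x m q h)‖
          ≤ ‖p - q‖ * (Del B m * C * ‖h‖) := by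
        calc ‖bilL d k m (p - q) (nDv φ d k x m q h)‖
            ≤ ‖p - q‖ * ‖nDv φ d k x m q h‖ := norm_bilL_apply_le d k m _ _
          _ ≤ ‖p - q‖ * (Del B m * C * ‖h‖) := by
              apply mul_le_mul_of_nonneg_left ?_ (norm_nonneg _)
              calc ‖nDv φ d k x m q h‖ ≤ ‖nDv φ d k x m q‖ * ‖h‖ :=
                    ContinuousLinearMap.le_opNorm _ _
                _ ≤ Del B m * C * ‖h‖ :=
                    mul_le_mul_of_nonneg_right (IH4 q hq) (norm_nonneg _)
      have hw3 : ‖bilL d k m h (nv φ d k x m p - nv φ d k x m q)‖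
          ≤ ‖h‖ * (Del B m * C * ‖p - q‖) := by
        calc ‖bilL d k m h (nv φ d k x m p - nv φ d k x m q)‖
            ≤ ‖h‖ * ‖nv φ d k x m p - nv φ d k x m q‖ := norm_bilL_apply_le d k m _ _
          _ ≤ ‖h‖ * (Del B m * C * ‖p - q‖) :=
              mul_le_mul_of_nonneg_left (IH3 p q hp hq) (norm_nonneg _)
      have hwpq : ‖wp - wq‖
          ≤ B m * (3 * m * (Del B m)^2 * C^2 * ‖p - q‖) * ‖h‖
            + ‖p - q‖ * (Del B m * C * ‖h‖) + ‖h‖ * (Del B m * C * ‖p - q‖) := by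
        rw [keyw]
        exact le_trans (norm_add_le _ _)
          (add_le_add (le_trans (norm_add_le _ _) (add_le_add hw1 hw2)) hw3)
      -- bound second term
      have hwq_norm : ‖wq‖ ≤ Del B (m+1) * C * ‖h‖ := by
        rw [hwq]
        have h1 : ‖bilL d k m q (nDv φ d k x m q h)‖ ≤ B m * (Del B m * C) * ‖h‖ := by
          calc ‖bilL d k m q (nDv φ d k x m q h)‖
              ≤ ‖bilL d k m q‖ * ‖nDv φ d k x m q h‖ := ContinuousLinearMap.le_opNorm _ _
            _ ≤ B m * (Del B m * C * ‖h‖) := by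
                apply mul_le_mul (hq m) ?_ (norm_nonneg _) (by linarith)
                calc ‖nDv φ d k x m q h‖ ≤ ‖nDv φ d k x m q‖ * ‖h‖ :=
                      ContinuousLinearMap.le_opNorm _ _
                  _ ≤ Del B m * C * ‖h‖ :=
                      mul_le_mul_of_nonneg_right (IH4 q hq) (norm_nonneg _)
            _ = B m * (Del B m * C) * ‖h‖ := by ring
        have h2 : ‖bilL d k m h (nv φ d k x m q)‖ ≤ (∏ j ∈ range m, B j) * C * ‖h‖ := by
          calc ‖bilL d k m h (nv φ d k x m q)‖
              ≤ ‖h‖ * ‖nv φ d k x m q‖ := norm_bilL_apply_le d k m _ _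
            _ ≤ ‖h‖ * ((∏ j ∈ range m, B j) * C) :=
                mul_le_mul_of_nonneg_left (IH2 q hq) (norm_nonneg _)
            _ = (∏ j ∈ range m, B j) * C * ‖h‖ := by ring
        calc ‖bilL d k m q (nDv φ d k x m q h) + bilL d k m h (nv φ d k x m q)‖
            ≤ B m * (Del B m * C) * ‖h‖ + (∏ j ∈ range m, B j) * C * ‖h‖ :=
              le_trans (norm_add_le _ _) (add_le_add h1 h2)
          _ = Del B (m+1) * C * ‖h‖ := by rw [hD']; ring
      have hsecond : ‖(DPhi φ zp - DPhi φ zq) wq‖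
          ≤ (Del B (m+1) * C * ‖p - q‖) * (Del B (m+1) * C * ‖h‖) := by
        calc ‖(DPhi φ zp - DPhi φ zq) wq‖ ≤ ‖zp - zq‖ * ‖wq‖ :=
              norm_DPhi_sub_apply hφsmooth _ _ _
          _ ≤ (Del B (m+1) * C * ‖p - q‖) * (Del B (m+1) * C * ‖h‖) := by
              apply mul_le_mul (Hz p q hp hq) hwq_norm (norm_nonneg _) (by positivity)
      have hfirst : ‖DPhi φ zp (wp - wq)‖
          ≤ B m * (3 * m * (Del B m)^2 * C^2 * ‖p - q‖) * ‖h‖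
            + ‖p - q‖ * (Del B m * C * ‖h‖) + ‖h‖ * (Del B m * C * ‖p - q‖) :=
        le_trans (norm_DPhi_apply hφdiff hφ _ _) hwpq
      -- final arithmetic
      have harith :
          B m * (3 * m * (Del B m)^2 * C^2 * ‖p - q‖) * ‖h‖
            + ‖p - q‖ * (Del B m * C * ‖h‖) + ‖h‖ * (Del B m * C * ‖p - q‖)
            + (Del B (m+1) * C * ‖p - q‖) * (Del B (m+1) * C * ‖h‖)
          ≤ 3 * (m+1:ℕ) * (Del B (m+1))^2 * C^2 * ‖p - q‖ * ‖h‖ := by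
        have hDle : Del B m ≤ Del B (m+1) := Del_le_succ hB m
        have hBD : B m * Del B m ≤ Del B (m+1) := by rw [hD']; nlinarith
        have hpq0 : (0:ℝ) ≤ ‖p - q‖ := norm_nonneg _
        have hh0 : (0:ℝ) ≤ ‖h‖ := norm_nonneg _
        have hDD : Del B m ≤ (Del B (m+1))^2 := by nlinarith
        have hCC : C ≤ C^2 := by nlinarith
        have hterm1 : B m * (3 * m * (Del B m)^2 * C^2 * ‖p - q‖) * ‖h‖
            ≤ 3 * m * (Del B (m+1))^2 * C^2 * ‖p - q‖ * ‖h‖ := by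
          have : B m * (Del B m)^2 ≤ (Del B (m+1))^2 := by nlinarith
          have hm0 : (0:ℝ) ≤ 3 * m := by positivity
          nlinarith [mul_nonneg hpq0 hh0, sq_nonneg C, mul_nonneg (mul_nonneg hm0 (sq_nonneg C)) (mul_nonneg hpq0 hh0)]
        have hterm2 : ‖p - q‖ * (Del B m * C * ‖h‖) + ‖h‖ * (Del B m * C * ‖p - q‖)
            ≤ 2 * (Del B (m+1))^2 * C^2 * ‖p - q‖ * ‖h‖ := by
          have h1 : Del B m * C ≤ (Del B (m+1))^2 * C^2 := by nlinarith
          nlinarith [mul_nonneg hpq0 hh0]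
        have hterm3 : (Del B (m+1) * C * ‖p - q‖) * (Del B (m+1) * C * ‖h‖)
            = (Del B (m+1))^2 * C^2 * ‖p - q‖ * ‖h‖ := by ring
        push_cast
        nlinarith [mul_nonneg hpq0 hh0]
      calc ‖DPhi φ zp (wp - wq) + (DPhi φ zp - DPhi φ zq) wq‖
          ≤ ‖DPhi φ zp (wp - wq)‖ + ‖(DPhi φ zp - DPhi φ zq) wq‖ := norm_add_le _ _
        _ ≤ B m * (3 * m * (Del B m)^2 * C^2 * ‖p - q‖) * ‖h‖
            + ‖p - q‖ * (Del B m * C * ‖h‖) + ‖h‖ * (Del B m * C * ‖p - q‖)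
            + (Del B (m+1) * C * ‖p - q‖) * (Del B (m+1) * C * ‖h‖) := by
            have := add_le_add hfirst hsecond
            linarith
        _ ≤ 3 * (m+1:ℕ) * (Del B (m+1))^2 * C^2 * ‖p - q‖ * ‖h‖ := harith
        _ = 3 * (m+1:ℕ) * (Del B (m+1))^2 * C^2 * ‖p - q‖ * ‖h‖ := rfl
    exact ⟨H1, H2, H3, H4, H5⟩
lemma net_eq (φ : ℝ → ℝ) (d : ℕ → ℕ) (k : ℕ) (x : En (d 0)) :
    ∀ (m : ℕ) (r : Params d k),
      net φ d (pW d k r) (m+1) x = bilL d k m r (nv φ d k x m r) := by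
  intro m
  induction m with
  | zero => intro r; rfl
  | succ m IH =>
    intro r
    have hstep : net φ d (pW d k r) (m+1+1) x
        = Matrix.toEuclideanLin (pW d k r (m+1))
            ((WithLp.equiv 2 _).symm fun j => φ ((net φ d (pW d k r) (m+1) x) j)) := rfl
    rw [hstep, IH r]
    rfl

set_option maxHeartbeats 4000000 in
/-- For a `k`-layer network with `1`-Lipschitz, `1`-smooth activation `φ`,
`φ 0 = 0`, weight spectral norms at most `B i` with `B i ≥ 1`, and `‖x‖ ≤ C`
with `C ≥ 1`, the parameter-gradient map `W ↦ ∇_W f_W(x)` is Lipschitz with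
constant at most `3 k Δ_{k,1}² C²`, where `Δ_{k,1} = ∑_{i=1}^k ∏_{j ≠ i} B_j`. -/
theorem net_param_grad_lipschitz (φ : ℝ → ℝ) (hφdiff : Differentiable ℝ φ)
    (hφ : LipschitzWith 1 φ) (hφsmooth : LipschitzWith 1 (deriv φ)) (hφ0 : φ 0 = 0)
    (d : ℕ → ℕ) (k : ℕ) (B : ℕ → ℝ) (hB : ∀ i, 1 ≤ B i) (C : ℝ) (hC : 1 ≤ C)
    (x : EuclideanSpace ℝ (Fin (d 0))) (hx : ‖x‖ ≤ C)
    (p q : Params d k)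
    (hp : ∀ i : Fin k, sNorm (pW d k p i.1) ≤ B i.1)
    (hq : ∀ i : Fin k, sNorm (pW d k q i.1) ≤ B i.1) :
    ‖fderiv ℝ (fun r : Params d k => netP φ d k r x) p
        - fderiv ℝ (fun r : Params d k => netP φ d k r x) q‖
      ≤ (3 * k * (∑ i ∈ range k, ∏ j ∈ (range k).erase i, B j) ^ 2 * C ^ 2) * ‖p - q‖ := by
  cases k with
  | zero =>
    have hfun : (fun r : Params d 0 => netP φ d 0 r x) = fun _ => x := rfl
    rw [hfun]
    simp
  | succ n =>
    -- transfer of the ball condition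
    have hball : ∀ (r : Params d (n+1)),
        (∀ i : Fin (n+1), sNorm (pW d (n+1) r i.1) ≤ B i.1) →
        ∀ i, ‖bilL d (n+1) i r‖ ≤ B i := by
      intro r hr i
      rw [norm_bilL_eq_sNorm]
      by_cases h : i < n+1
      · exact hr ⟨i, h⟩
      · have h0 : pW d (n+1) r i = 0 := dif_neg h
        rw [h0]
        have hz : sNorm (0 : Matrix (Fin (d (i+1))) (Fin (d i)) ℝ) = 0 := by
          simp [sNorm]
        rw [hz]
        linarith [hB i]
    have Hp := hball p hp
    have Hq := hball q hq
    obtain ⟨H1, H2, H3, H4, H5⟩ :=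
      master φ hφdiff hφ hφsmooth hφ0 d (n+1) B hB C hC x hx n
    -- the network as bilinear-in-last-layer composition
    have hFeq : (fun r : Params d (n+1) => netP φ d (n+1) r x)
        = fun r => bilL d (n+1) n r (nv φ d (n+1) x n r) :=
      funext fun r => net_eq φ d (n+1) x n r
    set DZ : Params d (n+1) → (Params d (n+1) →L[ℝ] En (d (n+1))) := fun r =>
      (bilL d (n+1) n).precompR (Params d (n+1)) r (nDv φ d (n+1) x n r)
        + (bilL d (n+1) n).precompL (Params d (n+1))
            (ContinuousLinearMap.id ℝ (Params d (n+1))) (nv φ d (n+1) x n r) with hDZ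
    have hZ : ∀ r, HasFDerivAt (fun r : Params d (n+1) => netP φ d (n+1) r x) (DZ r) r := by
      intro r
      rw [hFeq]
      exact (bilL d (n+1) n).hasFDerivAt_of_bilinear (hasFDerivAt_id r) (H1 r)
    rw [(hZ p).fderiv, (hZ q).fderiv]
    have hDZ_apply : ∀ (r h : Params d (n+1)),
        DZ r h = bilL d (n+1) n r (nDv φ d (n+1) x n r h)
          + bilL d (n+1) n h (nv φ d (n+1) x n r) := fun r h => rfl
    have hsum : (∑ i ∈ range (n+1), ∏ j ∈ (range (n+1)).erase i, B j) = Del B (n+1) := rfl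
    rw [hsum]
    have hC0 : (0:ℝ) ≤ C := le_trans zero_le_one hC
    have hD0 : 0 ≤ Del B n := Del_nonneg hB n
    have hD'1 : 1 ≤ Del B (n+1) := one_le_Del_succ hB n
    have hDle : Del B n ≤ Del B (n+1) := Del_le_succ hB n
    have hBD : B n * Del B n ≤ Del B (n+1) := by
      rw [Del_succ]; nlinarith [one_le_prodB hB n]
    apply ContinuousLinearMap.opNorm_le_bound _ (by positivity)
    intro h
    rw [ContinuousLinearMap.sub_apply, hDZ_apply, hDZ_apply]
    have keyw : bilL d (n+1) n p (nDv φ d (n+1) x n p h) + bilL d (n+1) n h (nv φ d (n+1) x n p)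
        - (bilL d (n+1) n q (nDv φ d (n+1) x n q h) + bilL d (n+1) n h (nv φ d (n+1) x n q))
        = bilL d (n+1) n p ((nDv φ d (n+1) x n p - nDv φ d (n+1) x n q) h)
          + bilL d (n+1) n (p - q) (nDv φ d (n+1) x n q h)
          + bilL d (n+1) n h (nv φ d (n+1) x n p - nv φ d (n+1) x n q) := by
      rw [ContinuousLinearMap.sub_apply, map_sub (bilL d (n+1) n p),
        map_sub (bilL d (n+1) n), map_sub (bilL d (n+1) n h)]
      simp only [ContinuousLinearMap.sub_apply]
      abel
    rw [keyw]
    have hw1 : ‖bilL d (n+1) n p ((nDv φ d (n+1) x n p - nDv φ d (n+1) x n q) h)‖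
        ≤ B n * (3 * n * (Del B n)^2 * C^2 * ‖p - q‖) * ‖h‖ := by
      calc ‖bilL d (n+1) n p ((nDv φ d (n+1) x n p - nDv φ d (n+1) x n q) h)‖
          ≤ ‖bilL d (n+1) n p‖ * ‖(nDv φ d (n+1) x n p - nDv φ d (n+1) x n q) h‖ :=
            ContinuousLinearMap.le_opNorm _ _
        _ ≤ B n * (3 * n * (Del B n)^2 * C^2 * ‖p - q‖ * ‖h‖) := by
            apply mul_le_mul (Hp n) ?_ (norm_nonneg _) (by linarith [hB n])
            calc ‖(nDv φ d (n+1) x n p - nDv φ d (n+1) x n q) h‖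
                ≤ ‖nDv φ d (n+1) x n p - nDv φ d (n+1) x n q‖ * ‖h‖ :=
                  ContinuousLinearMap.le_opNorm _ _
              _ ≤ 3 * n * (Del B n)^2 * C^2 * ‖p - q‖ * ‖h‖ :=
                  mul_le_mul_of_nonneg_right (H5 p q Hp Hq) (norm_nonneg _)
        _ = B n * (3 * n * (Del B n)^2 * C^2 * ‖p - q‖) * ‖h‖ := by ring
    have hw2 : ‖bilL d (n+1) n (p - q) (nDv φ d (n+1) x n q h)‖
        ≤ ‖p - q‖ * (Del B n * C * ‖h‖) := by
      calc ‖bilL d (n+1) n (p - q) (nDv φ d (n+1) x n q h)‖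
          ≤ ‖p - q‖ * ‖nDv φ d (n+1) x n q h‖ := norm_bilL_apply_le d (n+1) n _ _
        _ ≤ ‖p - q‖ * (Del B n * C * ‖h‖) := by
            apply mul_le_mul_of_nonneg_left ?_ (norm_nonneg _)
            calc ‖nDv φ d (n+1) x n q h‖ ≤ ‖nDv φ d (n+1) x n q‖ * ‖h‖ :=
                  ContinuousLinearMap.le_opNorm _ _
              _ ≤ Del B n * C * ‖h‖ :=
                  mul_le_mul_of_nonneg_right (H4 q Hq) (norm_nonneg _)
    have hw3 : ‖bilL d (n+1) n h (nv φ d (n+1) x n p - nv φ d (n+1) x n q)‖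
        ≤ ‖h‖ * (Del B n * C * ‖p - q‖) := by
      calc ‖bilL d (n+1) n h (nv φ d (n+1) x n p - nv φ d (n+1) x n q)‖
          ≤ ‖h‖ * ‖nv φ d (n+1) x n p - nv φ d (n+1) x n q‖ :=
            norm_bilL_apply_le d (n+1) n _ _
        _ ≤ ‖h‖ * (Del B n * C * ‖p - q‖) :=
            mul_le_mul_of_nonneg_left (H3 p q Hp Hq) (norm_nonneg _)
    have hpq0 : (0:ℝ) ≤ ‖p - q‖ := norm_nonneg _
    have hh0 : (0:ℝ) ≤ ‖h‖ := norm_nonneg _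
    have harith : B n * (3 * n * (Del B n)^2 * C^2 * ‖p - q‖) * ‖h‖
        + ‖p - q‖ * (Del B n * C * ‖h‖) + ‖h‖ * (Del B n * C * ‖p - q‖)
        ≤ 3 * ((n:ℝ)+1) * Del B (n+1) ^ 2 * C ^ 2 * ‖p - q‖ * ‖h‖ := by
      have hDD : Del B n ≤ (Del B (n+1))^2 := by nlinarith
      have hCC : C ≤ C^2 := by nlinarith
      have hterm1 : B n * (3 * n * (Del B n)^2 * C^2 * ‖p - q‖) * ‖h‖
          ≤ 3 * (n:ℝ) * (Del B (n+1))^2 * C^2 * ‖p - q‖ * ‖h‖ := by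
        have hx1 : B n * (Del B n)^2 ≤ (Del B (n+1))^2 := by nlinarith [hB n]
        have hm0 : (0:ℝ) ≤ 3 * (n:ℝ) := by positivity
        nlinarith [mul_nonneg hpq0 hh0, sq_nonneg C,
          mul_nonneg (mul_nonneg hm0 (sq_nonneg C)) (mul_nonneg hpq0 hh0)]
      have hterm2 : ‖p - q‖ * (Del B n * C * ‖h‖) + ‖h‖ * (Del B n * C * ‖p - q‖)
          ≤ 2 * (Del B (n+1))^2 * C^2 * ‖p - q‖ * ‖h‖ := by
        have h1 : Del B n * C ≤ (Del B (n+1))^2 * C^2 := by nlinarith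
        nlinarith [mul_nonneg hpq0 hh0]
      have hK : (0:ℝ) ≤ (Del B (n+1))^2 * C^2 * ‖p - q‖ * ‖h‖ := by positivity
      linarith [hterm1, hterm2, hK]
    calc ‖bilL d (n+1) n p ((nDv φ d (n+1) x n p - nDv φ d (n+1) x n q) h)
          + bilL d (n+1) n (p - q) (nDv φ d (n+1) x n q h)
          + bilL d (n+1) n h (nv φ d (n+1) x n p - nv φ d (n+1) x n q)‖
        ≤ B n * (3 * n * (Del B n)^2 * C^2 * ‖p - q‖) * ‖h‖
          + ‖p - q‖ * (Del B n * C * ‖h‖) + ‖h‖ * (Del B n * C * ‖p - q‖) :=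
          le_trans (norm_add_le _ _)
            (add_le_add (le_trans (norm_add_le _ _) (add_le_add hw1 hw2)) hw3)
      _ ≤ 3 * ((n:ℝ)+1) * Del B (n+1) ^ 2 * C ^ 2 * ‖p - q‖ * ‖h‖ := harith
      _ = 3 * (↑(n+1) : ℝ) * Del B (n+1) ^ 2 * C ^ 2 * ‖p - q‖ * ‖h‖ := by push_cast; ring
end

section
/- Non-expansiveness of gradient descent on convex smooth functions: if f : ℝ^p → ℝ is convex and β-smooth, then for any step size α ≤ 2/β, the gradient update G(w) = w - α∇f(w) satisfies ‖G(w) - G(w')‖ ≤ ‖w - w'‖ for all w, w'. -/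
open InnerProductSpace Set
open scoped RealInnerProductSpace

variable {F : Type*} [NormedAddCommGroup F] [InnerProductSpace ℝ F] [CompleteSpace F]

/-- directional derivative along a line -/
lemma aux_hasDerivAt_line (f : F → ℝ) (hdiff : Differentiable ℝ f) (x v : F) (t : ℝ) :
    HasDerivAt (fun s : ℝ => f (x + s • v)) ⟪gradient f (x + t • v), v⟫ t := by
  have h1 : HasFDerivAt f (toDual ℝ F (gradient f (x + t • v))) (x + t • v) :=
    (hdiff (x + t • v)).hasGradientAt.hasFDerivAt
  have h2 : HasDerivAt (fun s : ℝ => x + s • v) v t := by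
    simpa using ((hasDerivAt_id t).smul_const v).const_add x
  simpa [toDual_apply_apply, Function.comp_def] using h1.comp_hasDerivAt t h2

/-- convexity gradient inequality -/
lemma aux_convex_lb (f : F → ℝ) (hdiff : Differentiable ℝ f)
    (hconv : ConvexOn ℝ Set.univ f) (x y : F) :
    f x + ⟪gradient f x, y - x⟫ ≤ f y := by
  set φ : ℝ → ℝ := fun s => f (x + s • (y - x)) with hφ
  have hc : ConvexOn ℝ Set.univ φ := by
    have h := hconv.comp_affineMap (AffineMap.lineMap x y : ℝ →ᵃ[ℝ] F)
    have he : φ = f ∘ (AffineMap.lineMap x y : ℝ →ᵃ[ℝ] F) := by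
      funext s
      simp [φ, AffineMap.lineMap_apply, vsub_eq_sub, add_comm]
    rw [he]
    simpa using h
  have hd : HasDerivAt φ ⟪gradient f x, y - x⟫ 0 := by
    simpa using aux_hasDerivAt_line f hdiff x (y - x) 0
  have := hc.le_slope_of_hasDerivAt (mem_univ (0:ℝ)) (mem_univ (1:ℝ)) one_pos hd
  simp [slope, φ] at this
  have e : ⟪gradient f x, y - x⟫ = (fderiv ℝ f x) y - (fderiv ℝ f x) x := by simp
  linarith

/-- descent lemma for β-smooth functions -/
lemma aux_descent (f : F → ℝ) (hdiff : Differentiable ℝ f)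
    (β : NNReal) (hsmooth : LipschitzWith β (gradient f)) (x y : F) :
    f y ≤ f x + ⟪gradient f x, y - x⟫ + (β : ℝ) / 2 * ‖y - x‖ ^ 2 := by
  set v : F := y - x with hv
  set h : ℝ → ℝ := fun t => f (x + t • v) - t * ⟪gradient f x, v⟫
    - (β : ℝ) / 2 * t ^ 2 * ‖v‖ ^ 2 with hh
  have hd : ∀ t : ℝ, HasDerivAt h
      (⟪gradient f (x + t • v), v⟫ - ⟪gradient f x, v⟫ - (β : ℝ) * t * ‖v‖ ^ 2) t := by
    intro t
    have h1 := aux_hasDerivAt_line f hdiff x v t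
    have h2 : HasDerivAt (fun t : ℝ => t * ⟪gradient f x, v⟫) ⟪gradient f x, v⟫ t := by
      simpa using (hasDerivAt_id t).mul_const ⟪gradient f x, v⟫
    have h3 : HasDerivAt (fun t : ℝ => (β : ℝ) / 2 * t ^ 2 * ‖v‖ ^ 2)
        ((β : ℝ) * t * ‖v‖ ^ 2) t := by
      have := ((hasDerivAt_pow 2 t).const_mul ((β : ℝ) / 2)).mul_const (‖v‖ ^ 2)
      exact this.congr_deriv (by ring)
    simpa [hh, Pi.sub_def] using (h1.sub h2).sub h3
  have hanti : AntitoneOn h (Set.Icc (0 : ℝ) 1) := by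
    apply antitoneOn_of_deriv_nonpos (convex_Icc 0 1)
    · exact (continuous_iff_continuousAt.2 fun t => (hd t).continuousAt).continuousOn
    · intro t ht
      exact ((hd t).differentiableAt).differentiableWithinAt
    · intro t ht
      rw [interior_Icc] at ht
      rw [(hd t).deriv]
      have hb : ⟪gradient f (x + t • v) - gradient f x, v⟫ ≤ ‖gradient f (x + t • v) - gradient f x‖ * ‖v‖ :=
        real_inner_le_norm _ _
      have hl : ‖gradient f (x + t • v) - gradient f x‖ ≤ (β : ℝ) * (t * ‖v‖) := by
        have := hsmooth.dist_le_mul (x + t • v) x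
        rw [dist_eq_norm, dist_eq_norm] at this
        simpa [norm_smul, abs_of_pos ht.1] using this
      have hvn : (0:ℝ) ≤ ‖v‖ := norm_nonneg _
      nlinarith [inner_sub_left (𝕜 := ℝ) (gradient f (x + t • v)) (gradient f x) v]
  have h10 : h 1 ≤ h 0 := hanti (by norm_num) (by norm_num) zero_le_one
  simp [hh, hv] at h10
  have e : ⟪gradient f x, v⟫ = (fderiv ℝ f x) y - (fderiv ℝ f x) x := by simp [hv]
  linarith

/-- co-coercivity -/
lemma aux_cocoercive (f : F → ℝ) (hdiff : Differentiable ℝ f)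
    (hconv : ConvexOn ℝ Set.univ f) (β : NNReal) (hβ : 0 < β)
    (hsmooth : LipschitzWith β (gradient f)) (w w' : F) :
    (1 / (β : ℝ)) * ‖gradient f w - gradient f w'‖ ^ 2
      ≤ ⟪gradient f w - gradient f w', w - w'⟫ := by
  have hβ' : (0:ℝ) < β := hβ
  have key : ∀ a b : F, f a + ⟪gradient f a, b - a⟫
      + 1 / (2 * (β:ℝ)) * ‖gradient f b - gradient f a‖ ^ 2 ≤ f b := by
    intro a b
    set d : F := gradient f b - gradient f a with hd
    set z : F := b - ((β:ℝ))⁻¹ • d with hz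
    have h1 := aux_convex_lb f hdiff hconv a z
    have h2 := aux_descent f hdiff β hsmooth b z
    have e1 : ⟪gradient f a, z - a⟫
        = ⟪gradient f a, b - a⟫ - ((β:ℝ))⁻¹ * ⟪gradient f a, d⟫ := by
      have : z - a = (b - a) - ((β:ℝ))⁻¹ • d := by rw [hz]; abel
      rw [this, inner_sub_right, real_inner_smul_right]
    have e2 : ⟪gradient f b, z - b⟫ = -(((β:ℝ))⁻¹ * ⟪gradient f b, d⟫) := by
      have : z - b = -(((β:ℝ))⁻¹ • d) := by rw [hz]; abel
      rw [this, inner_neg_right, real_inner_smul_right]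
    have e3 : ‖z - b‖ ^ 2 = ((β:ℝ))⁻¹ ^ 2 * ‖d‖ ^ 2 := by
      have : z - b = -(((β:ℝ))⁻¹ • d) := by rw [hz]; abel
      rw [this, norm_neg, norm_smul, mul_pow]
      simp [abs_of_pos (inv_pos.2 hβ')]
    have e4 : ⟪gradient f b, d⟫ - ⟪gradient f a, d⟫ = ‖d‖ ^ 2 := by
      rw [← inner_sub_left, ← hd, real_inner_self_eq_norm_sq]
    rw [e1] at h1
    rw [e2, e3] at h2
    have hβne : (β:ℝ) ≠ 0 := ne_of_gt hβ'
    have expand : (β:ℝ)/2 * (((β:ℝ))⁻¹ ^ 2 * ‖d‖ ^ 2) = 1/(2*(β:ℝ)) * ‖d‖^2 := by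
      field_simp
    rw [expand] at h2
    have e5 : ((β:ℝ))⁻¹ * ⟪gradient f b, d⟫ - ((β:ℝ))⁻¹ * ⟪gradient f a, d⟫
        = ((β:ℝ))⁻¹ * ‖d‖ ^ 2 := by rw [← mul_sub, e4]
    have e6 : 1/(2*(β:ℝ)) * ‖d‖^2 + 1/(2*(β:ℝ)) * ‖d‖^2 = ((β:ℝ))⁻¹ * ‖d‖^2 := by
      field_simp; ring
    linarith
  have k1 := key w w'
  have k2 := key w' w
  have hsymm : ‖gradient f w - gradient f w'‖ = ‖gradient f w' - gradient f w‖ :=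
    norm_sub_rev _ _
  have hi : ⟪gradient f w, w' - w⟫ + ⟪gradient f w', w - w'⟫
      = -⟪gradient f w - gradient f w', w - w'⟫ := by
    rw [inner_sub_left]
    have : (w' - w : F) = -(w - w') := by abel
    rw [this, inner_neg_right]
    ring
  rw [← hsymm] at k1
  have hadd := add_le_add k1 k2
  have h2β : 1 / (2*(β:ℝ)) * ‖gradient f w - gradient f w'‖^2
      + 1 / (2*(β:ℝ)) * ‖gradient f w - gradient f w'‖^2
      = 1/(β:ℝ) * ‖gradient f w - gradient f w'‖^2 := by field_simp; ring
  linarith [hadd, hi, h2β]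


/-- Non-expansiveness of gradient descent on convex smooth functions: if
`f : ℝ^p → ℝ` is convex and `β`-smooth (differentiable with `β`-Lipschitz
gradient), then for any step size `0 < α ≤ 2/β` the gradient update
`G(w) = w - α ∇f(w)` satisfies `‖G(w) - G(w')‖ ≤ ‖w - w'‖` for all `w, w'`. -/
theorem gradient_step_nonexpansive (p : ℕ) (f : EuclideanSpace ℝ (Fin p) → ℝ)
    (hdiff : Differentiable ℝ f) (hconv : ConvexOn ℝ Set.univ f)
    (β : NNReal) (hβ : 0 < β) (hsmooth : LipschitzWith β (gradient f))
    (α : ℝ) (hα : 0 < α) (hα2 : α ≤ 2 / β) (w w' : EuclideanSpace ℝ (Fin p)) :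
    ‖(w - α • gradient f w) - (w' - α • gradient f w')‖ ≤ ‖w - w'‖ := by
  have hβ' : (0:ℝ) < β := hβ
  have hco := aux_cocoercive f hdiff hconv β hβ hsmooth w w'
  set u : EuclideanSpace ℝ (Fin p) := w - w' with hu
  set d : EuclideanSpace ℝ (Fin p) := gradient f w - gradient f w' with hd
  have hre : (w - α • gradient f w) - (w' - α • gradient f w') = u - α • d := by
    rw [hu, hd, smul_sub]; abel
  rw [hre]
  have hsq : ‖u - α • d‖ ^ 2 ≤ ‖u‖ ^ 2 := by
    have hexp : ‖u - α • d‖ ^ 2 = ‖u‖ ^ 2 - 2 * (α * ⟪u, d⟫) + α ^ 2 * ‖d‖ ^ 2 := by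
      rw [norm_sub_sq_real, real_inner_smul_right, norm_smul]
      simp [mul_pow, abs_of_pos hα]
    have hcomm : ⟪u, d⟫ = ⟪d, u⟫ := real_inner_comm _ _
    have h1 : α * ((1 / (β:ℝ)) * ‖d‖ ^ 2) ≤ α * ⟪d, u⟫ :=
      mul_le_mul_of_nonneg_left hco hα.le
    have h2 : α * α ≤ α * (2 / (β:ℝ)) := mul_le_mul_of_nonneg_left hα2 hα.le
    have key : α ^ 2 * ‖d‖ ^ 2 ≤ 2 * (α * ⟪d, u⟫) := by
      calc α ^ 2 * ‖d‖ ^ 2 = (α * α) * ‖d‖ ^ 2 := by ring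
        _ ≤ (α * (2 / (β:ℝ))) * ‖d‖ ^ 2 := mul_le_mul_of_nonneg_right h2 (sq_nonneg _)
        _ = 2 * (α * ((1 / (β:ℝ)) * ‖d‖ ^ 2)) := by ring
        _ ≤ 2 * (α * ⟪d, u⟫) := by linarith [h1]
    rw [hexp, hcomm]
    linarith [key]
  calc ‖u - α • d‖ = Real.sqrt (‖u - α • d‖ ^ 2) := (Real.sqrt_sq (norm_nonneg _)).symm
    _ ≤ Real.sqrt (‖u‖ ^ 2) := Real.sqrt_le_sqrt hsq
    _ = ‖u‖ := Real.sqrt_sq (norm_nonneg _)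
end

section
/- Input-Lipschitzness of the input gradient: for a k-layer network f_W(x) = W_k φ(...φ(W_1 x)) with 1-Lipschitz, 1-smooth activation φ, φ(0)=0, and ‖W_i‖ ≤ B_i, we have ‖∇_x f_W(x) - ∇_x f_W(x')‖ ≤ Δ_{k,0}·(Σ_{i=1}^{k-1} Δ_{i,0})·‖x - x'‖ for all inputs x, x', where Δ_{i,0} = ∏_{j=1}^i B_j. -/
open Finset

noncomputable def diagCLM {n : ℕ} (a : Fin n → ℝ) :
    EuclideanSpace ℝ (Fin n) →L[ℝ] EuclideanSpace ℝ (Fin n) :=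
  ((PiLp.continuousLinearEquiv 2 ℝ (fun _ : Fin n => ℝ)).symm :
      (Fin n → ℝ) →L[ℝ] EuclideanSpace ℝ (Fin n)).comp
    (ContinuousLinearMap.pi fun i => a i • EuclideanSpace.proj i)

lemma diagCLM_apply {n : ℕ} (a : Fin n → ℝ) (v : EuclideanSpace ℝ (Fin n)) (i : Fin n) :
    diagCLM a v i = a i * v i := rfl

lemma diagCLM_sub {n : ℕ} (a b : Fin n → ℝ) :
    diagCLM a - diagCLM b = diagCLM (a - b) := by
  ext v i
  simp [diagCLM_apply, sub_mul]

lemma euclid_norm_le_norm {n : ℕ} (u v : EuclideanSpace ℝ (Fin n))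
    (h : ∀ i, |u i| ≤ |v i|) : ‖u‖ ≤ ‖v‖ := by
  rw [EuclideanSpace.norm_eq, EuclideanSpace.norm_eq]
  apply Real.sqrt_le_sqrt
  apply Finset.sum_le_sum
  intro i _
  simp only [Real.norm_eq_abs]
  exact pow_le_pow_left₀ (abs_nonneg _) (h i) 2

lemma euclid_abs_coord_le {n : ℕ} (v : EuclideanSpace ℝ (Fin n)) (i : Fin n) :
    |v i| ≤ ‖v‖ := by
  rw [EuclideanSpace.norm_eq]
  rw [show |v i| = Real.sqrt (|v i| ^ 2) by rw [Real.sqrt_sq (abs_nonneg _)]]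
  apply Real.sqrt_le_sqrt
  calc |v i| ^ 2 = ‖v i‖ ^ 2 := by rw [Real.norm_eq_abs]
    _ ≤ ∑ j, ‖v j‖ ^ 2 :=
      Finset.single_le_sum (f := fun j => ‖v j‖ ^ 2) (fun j _ => by positivity) (mem_univ i)

lemma diagCLM_norm_le {n : ℕ} (a : Fin n → ℝ) (c : ℝ) (hc : 0 ≤ c)
    (h : ∀ i, |a i| ≤ c) : ‖diagCLM a‖ ≤ c := by
  apply ContinuousLinearMap.opNorm_le_bound _ hc
  intro v
  rw [EuclideanSpace.norm_eq, EuclideanSpace.norm_eq, ← Real.sqrt_sq hc,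
    ← Real.sqrt_mul (sq_nonneg c)]
  apply Real.sqrt_le_sqrt
  rw [Finset.mul_sum]
  apply Finset.sum_le_sum
  intro i _
  simp only [Real.norm_eq_abs, diagCLM_apply, abs_mul, mul_pow]
  have h2 : |a i| ^ 2 ≤ c ^ 2 := pow_le_pow_left₀ (abs_nonneg _) (h i) 2
  nlinarith [sq_nonneg (v i), abs_nonneg (v i)]

lemma hasFDerivAt_phiMap (φ : ℝ → ℝ) (hφdiff : Differentiable ℝ φ) {n : ℕ}
    (y : EuclideanSpace ℝ (Fin n)) :
    HasFDerivAt
      (fun v : EuclideanSpace ℝ (Fin n) => (WithLp.equiv 2 (Fin n → ℝ)).symm fun j => φ (v j))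
      (diagCLM fun i => deriv φ (y i)) y := by
  have hinner : HasFDerivAt (fun v : EuclideanSpace ℝ (Fin n) => fun i => φ (v i))
      (ContinuousLinearMap.pi fun i => deriv φ (y i) • EuclideanSpace.proj (𝕜 := ℝ) i) y := by
    apply hasFDerivAt_pi.2
    intro i
    exact (hφdiff (y i)).hasDerivAt.comp_hasFDerivAt y
      (EuclideanSpace.proj (𝕜 := ℝ) i).hasFDerivAt
  exact (((PiLp.continuousLinearEquiv 2 ℝ (fun _ : Fin n => ℝ)).symm :
      (Fin n → ℝ) →L[ℝ] EuclideanSpace ℝ (Fin n)).hasFDerivAt).comp y hinner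

lemma abs_deriv_le_one (φ : ℝ → ℝ) (hφdiff : Differentiable ℝ φ)
    (hφ : LipschitzWith 1 φ) (t : ℝ) : |deriv φ t| ≤ 1 := by
  have h := ((hφdiff t).hasDerivAt.hasFDerivAt).le_of_lipschitz hφ
  rwa [ContinuousLinearMap.norm_toSpanSingleton,
    Real.norm_eq_abs, NNReal.coe_one] at h

section net

variable (φ : ℝ → ℝ) (d : ℕ → ℕ) (W : (i : ℕ) → Matrix (Fin (d (i+1))) (Fin (d i)) ℝ)

/-- The `i`-th weight matrix as a continuous linear map. -/
noncomputable def Wc (i : ℕ) : EuclideanSpace ℝ (Fin (d i)) →L[ℝ] EuclideanSpace ℝ (Fin (d (i+1))) :=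
  LinearMap.toContinuousLinearMap (Matrix.toEuclideanLin (W i))

lemma norm_Wc (i : ℕ) : ‖Wc d W i‖ = sNorm (W i) := rfl

/-- The derivative of `net φ d W k` at `x`. -/
noncomputable def netD : (k : ℕ) → EuclideanSpace ℝ (Fin (d 0)) →
    (EuclideanSpace ℝ (Fin (d 0)) →L[ℝ] EuclideanSpace ℝ (Fin (d k)))
  | 0 => fun _ => ContinuousLinearMap.id ℝ _
  | 1 => fun _ => Wc d W 0
  | (k+2) => fun x => (Wc d W (k+1)).comp
      ((diagCLM fun i => deriv φ (net φ d W (k+1) x i)).comp (netD (k+1) x))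

lemma hasFDerivAt_net (hφdiff : Differentiable ℝ φ) (k : ℕ)
    (x : EuclideanSpace ℝ (Fin (d 0))) :
    HasFDerivAt (net φ d W k) (netD φ d W k x) x := by
  induction k with
  | zero => exact hasFDerivAt_id x
  | succ n ih =>
    match n, ih with
    | 0, _ => exact (Wc d W 0).hasFDerivAt
    | (m+1), ih =>
      exact ((Wc d W (m+1)).hasFDerivAt).comp x
        ((hasFDerivAt_phiMap φ hφdiff (net φ d W (m+1) x)).comp x ih)

end net

lemma lip_coord (φ : ℝ → ℝ) (hφ : LipschitzWith 1 φ) (a b : ℝ) : |φ a - φ b| ≤ |a - b| := by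
  have := hφ.dist_le_mul a b
  rwa [Real.dist_eq, Real.dist_eq, NNReal.coe_one, one_mul] at this

lemma phiMap_lip (φ : ℝ → ℝ) (hφ : LipschitzWith 1 φ) {n : ℕ}
    (a b : EuclideanSpace ℝ (Fin n)) :
    ‖((WithLp.equiv 2 (Fin n → ℝ)).symm fun j => φ (a j))
      - ((WithLp.equiv 2 (Fin n → ℝ)).symm fun j => φ (b j))‖ ≤ ‖a - b‖ := by
  apply euclid_norm_le_norm
  intro i
  have h1 : (((WithLp.equiv 2 (Fin n → ℝ)).symm fun j => φ (a j))
      - ((WithLp.equiv 2 (Fin n → ℝ)).symm fun j => φ (b j))) i = φ (a i) - φ (b i) := rfl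
  have h2 : (a - b) i = a i - b i := rfl
  rw [h1, h2]
  exact lip_coord φ hφ _ _

section bounds

variable (φ : ℝ → ℝ) (d : ℕ → ℕ) (W : (i : ℕ) → Matrix (Fin (d (i+1))) (Fin (d i)) ℝ)
  (B : ℕ → ℝ)

lemma net_lipschitz (hφ : LipschitzWith 1 φ) (k : ℕ)
    (hW : ∀ i, i < k → sNorm (W i) ≤ B i)
    (x x' : EuclideanSpace ℝ (Fin (d 0))) :
    ‖net φ d W k x - net φ d W k x'‖ ≤ (∏ i ∈ range k, B i) * ‖x - x'‖ := by
  induction k with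
  | zero => simp [net]
  | succ n ih =>
    match n, ih with
    | 0, _ =>
      have : net φ d W 1 x - net φ d W 1 x' = Wc d W 0 (x - x') := by
        show Matrix.toEuclideanLin (W 0) x - Matrix.toEuclideanLin (W 0) x' = _
        rw [← map_sub]; rfl
      rw [this, prod_range_one]
      exact ((Wc d W 0).le_opNorm _).trans
        (mul_le_mul_of_nonneg_right (hW 0 one_pos) (norm_nonneg _))
    | (m+1), ih =>
      have hBnn : ∀ i, i < m + 2 → 0 ≤ B i := fun i hi => (norm_nonneg _).trans (hW i hi)
      have ih' := ih (fun i hi => hW i (hi.trans (Nat.lt_succ_self _)))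
      have key : net φ d W (m+2) x - net φ d W (m+2) x'
          = Wc d W (m+1) (((WithLp.equiv 2 _).symm fun j => φ (net φ d W (m+1) x j))
            - ((WithLp.equiv 2 _).symm fun j => φ (net φ d W (m+1) x' j))) := by
        show Matrix.toEuclideanLin (W (m+1)) _ - Matrix.toEuclideanLin (W (m+1)) _ = _
        rw [← map_sub]; rfl
      rw [key, prod_range_succ]
      calc ‖Wc d W (m+1) _‖ ≤ ‖Wc d W (m+1)‖ * ‖_ - _‖ := (Wc d W (m+1)).le_opNorm _
        _ ≤ B (m+1) * ‖net φ d W (m+1) x - net φ d W (m+1) x'‖ := by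
            apply mul_le_mul (hW (m+1) (Nat.lt_succ_self _)) (phiMap_lip φ hφ _ _)
              (norm_nonneg _) (hBnn (m+1) (Nat.lt_succ_self _))
        _ ≤ B (m+1) * ((∏ i ∈ range (m+1), B i) * ‖x - x'‖) :=
            mul_le_mul_of_nonneg_left ih' (hBnn (m+1) (Nat.lt_succ_self _))
        _ = (∏ i ∈ range (m+1), B i) * B (m+1) * ‖x - x'‖ := by ring

lemma netD_norm_le (hφdiff : Differentiable ℝ φ) (hφ : LipschitzWith 1 φ) (k : ℕ)
    (hW : ∀ i, i < k → sNorm (W i) ≤ B i) (x : EuclideanSpace ℝ (Fin (d 0))) :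
    ‖netD φ d W k x‖ ≤ ∏ i ∈ range k, B i := by
  induction k with
  | zero => rw [prod_range_zero]; exact ContinuousLinearMap.norm_id_le
  | succ n ih =>
    match n, ih with
    | 0, _ =>
      rw [prod_range_one]
      exact hW 0 one_pos
    | (m+1), ih =>
      have hBnn : ∀ i, i < m + 2 → 0 ≤ B i := fun i hi => (norm_nonneg _).trans (hW i hi)
      have ih' := ih (fun i hi => hW i (hi.trans (Nat.lt_succ_self _)))
      have hdiag : ‖diagCLM fun i => deriv φ (net φ d W (m+1) x i)‖ ≤ 1 :=
        diagCLM_norm_le _ 1 zero_le_one fun i => abs_deriv_le_one φ hφdiff hφ _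
      rw [prod_range_succ]
      calc ‖netD φ d W (m+2) x‖
          ≤ ‖Wc d W (m+1)‖ * ‖(diagCLM fun i => deriv φ (net φ d W (m+1) x i)).comp
              (netD φ d W (m+1) x)‖ := ContinuousLinearMap.opNorm_comp_le _ _
        _ ≤ B (m+1) * (1 * (∏ i ∈ range (m+1), B i)) := by
            apply mul_le_mul (hW (m+1) (Nat.lt_succ_self _))
              ((ContinuousLinearMap.opNorm_comp_le _ _).trans
                (mul_le_mul hdiag ih' (norm_nonneg _) zero_le_one))
              (norm_nonneg _) (hBnn (m+1) (Nat.lt_succ_self _))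
        _ = (∏ i ∈ range (m+1), B i) * B (m+1) := by ring

end bounds

lemma netD_lip (φ : ℝ → ℝ) (d : ℕ → ℕ)
    (W : (i : ℕ) → Matrix (Fin (d (i+1))) (Fin (d i)) ℝ) (B : ℕ → ℝ)
    (hφdiff : Differentiable ℝ φ) (hφ : LipschitzWith 1 φ)
    (hφsmooth : LipschitzWith 1 (deriv φ)) (k : ℕ)
    (hW : ∀ i, i < k → sNorm (W i) ≤ B i) (x x' : EuclideanSpace ℝ (Fin (d 0))) :
    ‖netD φ d W k x - netD φ d W k x'‖
      ≤ ((∏ i ∈ range k, B i) * ∑ i ∈ Icc 1 (k-1), ∏ j ∈ range i, B j) * ‖x - x'‖ := by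
  induction k with
  | zero =>
    have h : netD φ d W 0 x = netD φ d W 0 x' := rfl
    rw [h, sub_self, norm_zero]
    simp
  | succ n ih =>
    match n, ih with
    | 0, _ =>
      have h : netD φ d W 1 x = netD φ d W 1 x' := rfl
      rw [h, sub_self, norm_zero]
      simp
    | (m+1), ih =>
      have hBnn : ∀ i, i < m + 2 → 0 ≤ B i := fun i hi => (norm_nonneg _).trans (hW i hi)
      have hW' : ∀ i, i < m + 1 → sNorm (W i) ≤ B i :=
        fun i hi => hW i (hi.trans (Nat.lt_succ_self _))
      set A := Wc d W (m+1) with hAdef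
      set g := net φ d W (m+1) with hgdef
      set Gx := netD φ d W (m+1) x with hGxdef
      set Gx' := netD φ d W (m+1) x' with hGx'def
      set Dx := diagCLM fun i => deriv φ (g x i) with hDxdef
      set Dx' := diagCLM fun i => deriv φ (g x' i) with hDx'def
      set P := ∏ i ∈ range (m+1), B i with hPdef
      set S := ∑ i ∈ Icc 1 m, ∏ j ∈ range i, B j with hSdef
      set t := ‖x - x'‖ with htdef
      have hPnn : 0 ≤ P := prod_nonneg fun i hi =>
        hBnn i ((mem_range.1 hi).trans (Nat.lt_succ_self _))
      have hSnn : 0 ≤ S := sum_nonneg fun i hi => prod_nonneg fun j hj =>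
        hBnn j (lt_of_lt_of_le (mem_range.1 hj)
          (le_trans (mem_Icc.1 hi).2 (le_trans (Nat.le_succ m) (Nat.le_succ (m+1)))))
      have htnn : 0 ≤ t := norm_nonneg _
      have split : netD φ d W (m+2) x - netD φ d W (m+2) x'
          = A.comp ((Dx - Dx').comp Gx + Dx'.comp (Gx - Gx')) := by
        show A.comp (Dx.comp Gx) - A.comp (Dx'.comp Gx') = _
        rw [ContinuousLinearMap.sub_comp, ContinuousLinearMap.comp_sub, sub_add_sub_cancel,
          ContinuousLinearMap.comp_sub]
      have hA : ‖A‖ ≤ B (m+1) := hW (m+1) (Nat.lt_succ_self _)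
      have hGx : ‖Gx‖ ≤ P := netD_norm_le φ d W B hφdiff hφ (m+1) hW' x
      have hD' : ‖Dx'‖ ≤ 1 :=
        diagCLM_norm_le _ 1 zero_le_one fun i => abs_deriv_le_one φ hφdiff hφ _
      have hDD : ‖Dx - Dx'‖ ≤ P * t := by
        rw [hDxdef, hDx'def, diagCLM_sub]
        apply diagCLM_norm_le _ _ (mul_nonneg hPnn htnn)
        intro i
        have h1 : ((fun i => deriv φ (g x i)) - fun i => deriv φ (g x' i)) i
            = deriv φ (g x i) - deriv φ (g x' i) := rfl
        rw [h1]
        calc |deriv φ (g x i) - deriv φ (g x' i)| ≤ |g x i - g x' i| :=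
              lip_coord (deriv φ) hφsmooth _ _
          _ = |(g x - g x') i| := rfl
          _ ≤ ‖g x - g x'‖ := euclid_abs_coord_le _ i
          _ ≤ P * t := net_lipschitz φ d W B hφ (m+1) hW' x x'
      have hGG : ‖Gx - Gx'‖ ≤ P * S * t := by
        have := ih hW'
        rwa [Nat.add_sub_cancel] at this
      calc ‖netD φ d W (m+2) x - netD φ d W (m+2) x'‖
          ≤ ‖A‖ * ‖(Dx - Dx').comp Gx + Dx'.comp (Gx - Gx')‖ := by
            rw [split]; exact ContinuousLinearMap.opNorm_comp_le _ _
        _ ≤ ‖A‖ * (‖Dx - Dx'‖ * ‖Gx‖ + ‖Dx'‖ * ‖Gx - Gx'‖) := by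
            apply mul_le_mul_of_nonneg_left _ (norm_nonneg A)
            exact (norm_add_le _ _).trans (add_le_add
              (ContinuousLinearMap.opNorm_comp_le _ _) (ContinuousLinearMap.opNorm_comp_le _ _))
        _ ≤ B (m+1) * ((P * t) * P + 1 * (P * S * t)) := by
            apply mul_le_mul hA _ (add_nonneg (mul_nonneg (norm_nonneg _) (norm_nonneg _))
              (mul_nonneg (norm_nonneg _) (norm_nonneg _))) (hBnn (m+1) (Nat.lt_succ_self _))
            exact add_le_add
              (mul_le_mul hDD hGx (norm_nonneg _) (mul_nonneg hPnn htnn))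
              (mul_le_mul hD' hGG (norm_nonneg _) zero_le_one)
        _ = ((∏ i ∈ range (m+2), B i) * ∑ i ∈ Icc 1 ((m+2)-1), ∏ j ∈ range i, B j) * t := by
            rw [show (m+2)-1 = m+1 from rfl, prod_range_succ,
              Finset.sum_Icc_succ_top (Nat.succ_le_succ (Nat.zero_le m)), ← hPdef, ← hSdef]
            ring

/-- Input-Lipschitzness of the input gradient: for a `k`-layer network with
differentiable, `1`-Lipschitz, `1`-smooth activation `φ`, `φ 0 = 0`, and weight
spectral norms `‖W_i‖ ≤ B_i`, we have
`‖∇_x f_W(x) - ∇_x f_W(x')‖ ≤ Δ_{k,0} (∑_{i=1}^{k-1} Δ_{i,0}) ‖x - x'‖`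
for all inputs `x, x'`, where `Δ_{i,0} = ∏_{j=1}^i B_j`. -/
theorem simpleGrad_input_lipschitz (φ : ℝ → ℝ) (hφdiff : Differentiable ℝ φ)
    (hφ : LipschitzWith 1 φ) (hφsmooth : LipschitzWith 1 (deriv φ)) (hφ0 : φ 0 = 0)
    (d : ℕ → ℕ) (W : (i : ℕ) → Matrix (Fin (d (i+1))) (Fin (d i)) ℝ)
    (k : ℕ) (B : ℕ → ℝ) (hW : ∀ i, i < k → sNorm (W i) ≤ B i)
    (x x' : EuclideanSpace ℝ (Fin (d 0))) :
    ‖fderiv ℝ (net φ d W k) x - fderiv ℝ (net φ d W k) x'‖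
      ≤ ((∏ i ∈ range k, B i) * ∑ i ∈ Icc 1 (k-1), ∏ j ∈ range i, B j)
          * ‖x - x'‖ := by
  rw [(hasFDerivAt_net φ d W hφdiff k x).fderiv, (hasFDerivAt_net φ d W hφdiff k x').fderiv]
  exact netD_lip φ d W B hφdiff hφ hφsmooth k hW x x'
end
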